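/- arXiv:1307.5088 — 7 statements merged into one kernel-verified Lean document; each statement's English description precedes it below -/
import Mathlib

section
/- Let f be holomorphic in the unit disc D such that there is C > 0 with Area{z ∈ D : |f(z)| > λ(1−|z|)} ≤ C/λ for all λ > 0. Then f belongs to the weak Hardy space H^1_w; in fact the boundary values satisfy |{e^{iθ} ∈ ∂D : |f(e^{iθ})| > λ}| ≤ (1 + 8C)/λ for all λ > 0. -/
open MeasureTheory Real Set Filter

noncomputable section

set_option maxHeartbeats 1000000 in
theorem weak_area_bound_implies_weak_H1 (f : ℂ → ℂ) (C : ℝ) (hC : 0 < C)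
    (hf : DifferentiableOn ℂ f (Metric.ball 0 1))
    (harea : ∀ lam > (0:ℝ),
      volume {z ∈ Metric.ball (0:ℂ) 1 | lam * (1 - ‖z‖) < ‖f z‖} ≤ ENNReal.ofReal (C / lam)) :
    ∀ g : ℝ → ℂ,
      (∀ᵐ (θ : ℝ) ∂(volume.restrict (Set.Ico (0:ℝ) (2*π))),
        Filter.Tendsto (fun r : ℝ => f ((r:ℂ) * Complex.exp ((θ:ℂ) * Complex.I)))
          (nhdsWithin 1 (Set.Iio 1)) (nhds (g θ))) →
      ∀ lam > (0:ℝ),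
        volume {θ ∈ Set.Ico (0:ℝ) (2*π) | lam < ‖g θ‖} ≤ ENNReal.ofReal ((1 + 8*C) / lam) := by
  intro g hg lam hlam
  have hπ : (0:ℝ) < π := Real.pi_pos
  have hfc : ContinuousOn f (Metric.ball 0 1) := hf.continuousOn
  -- the exceptional sets
  set E : ℕ → Set ℝ := fun n =>
    {θ : ℝ | θ ∈ Set.Ico (0:ℝ) (2*π) ∧ ∀ r : ℝ, r ∈ Set.Ioo (1 - 1/(n+2:ℝ)) 1 →
      lam ≤ ‖f ((r:ℂ) * Complex.exp ((θ:ℂ) * Complex.I))‖} with hE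
  have hden : ∀ n : ℕ, (0:ℝ) < (n:ℝ) + 2 := fun n => by positivity
  have ha_half : ∀ n : ℕ, (1:ℝ)/2 ≤ 1 - 1/((n:ℝ)+2) := by
    intro n
    have h2 : (1:ℝ)/((n:ℝ)+2) ≤ 1/2 := by
      apply one_div_le_one_div_of_le (by norm_num)
      have : (0:ℝ) ≤ (n:ℝ) := Nat.cast_nonneg n
      linarith
    linarith
  have ha_lt : ∀ n : ℕ, 1 - 1/((n:ℝ)+2) < 1 := by
    intro n
    have : (0:ℝ) < 1/((n:ℝ)+2) := by positivity
    linarith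
  -- points r e^{iθ} with 0 < r < 1 lie in the unit ball
  have hmem : ∀ r : ℝ, r ∈ Set.Ioo (0:ℝ) 1 → ∀ θ : ℝ,
      ((r:ℂ) * Complex.exp ((θ:ℂ) * Complex.I)) ∈ Metric.ball (0:ℂ) 1 := by
    intro r hr θ
    rw [Metric.mem_ball, dist_zero_right]
    rw [norm_mul, Complex.norm_exp_ofReal_mul_I,
      Complex.norm_real, Real.norm_eq_abs, abs_of_pos hr.1, mul_one]
    exact hr.2
  -- measurability of E n
  have hEmeas : ∀ n, MeasurableSet (E n) := by
    intro n
    have hrepr : E n = Set.Ico (0:ℝ) (2*π) ∩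
        ⋂ (r : Set.Ioo (1 - 1/((n:ℝ)+2)) (1:ℝ)),
          {θ : ℝ | lam ≤ ‖f (((r:ℝ):ℂ) * Complex.exp ((θ:ℂ) * Complex.I))‖} := by
      ext θ
      simp only [hE, Set.mem_setOf_eq, Set.mem_inter_iff, Set.mem_iInter, Subtype.forall]
    rw [hrepr]
    refine measurableSet_Ico.inter (IsClosed.measurableSet (isClosed_iInter fun r => ?_))
    have hr : (r:ℝ) ∈ Set.Ioo (0:ℝ) 1 := by
      refine ⟨lt_of_lt_of_le (by norm_num) (le_of_lt (lt_of_le_of_lt (ha_half n) r.2.1)), r.2.2⟩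
    have hcont : Continuous fun θ : ℝ => f (((r:ℝ):ℂ) * Complex.exp ((θ:ℂ) * Complex.I)) := by
      apply hfc.comp_continuous
      · continuity
      · exact fun θ => hmem (r:ℝ) hr θ
    exact isClosed_le continuous_const hcont.norm
  -- monotonicity of E
  have hmono : Monotone E := by
    apply monotone_nat_of_le_succ
    intro n θ hθ
    refine ⟨hθ.1, fun r hr => hθ.2 r ⟨lt_of_le_of_lt ?_ hr.1, hr.2⟩⟩
    have : (1:ℝ)/((n:ℝ)+1+2) ≤ 1/((n:ℝ)+2) := by
      apply one_div_le_one_div_of_le (hden n); linarith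
    push_cast
    linarith
  -- a.e. covering
  have hcover : {θ ∈ Set.Ico (0:ℝ) (2*π) | lam < ‖g θ‖} ⊆ (⋃ n, E n) ∪
      ({θ : ℝ | ¬ Filter.Tendsto (fun r : ℝ => f ((r:ℂ) * Complex.exp ((θ:ℂ) * Complex.I)))
        (nhdsWithin 1 (Set.Iio 1)) (nhds (g θ))} ∩ Set.Ico (0:ℝ) (2*π)) := by
    rintro θ ⟨hθI, hθg⟩
    by_cases hP : Filter.Tendsto (fun r : ℝ => f ((r:ℂ) * Complex.exp ((θ:ℂ) * Complex.I)))
        (nhdsWithin 1 (Set.Iio 1)) (nhds (g θ))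
    · left
      have h1 : ∀ᶠ x : ℝ in nhds ‖g θ‖, lam ≤ x := eventually_ge_nhds hθg
      have hev : ∀ᶠ r : ℝ in nhdsWithin 1 (Set.Iio 1),
          lam ≤ ‖f ((r:ℂ) * Complex.exp ((θ:ℂ) * Complex.I))‖ :=
        (hP.norm).eventually h1
      rw [(nhdsLT_basis_of_exists_lt ⟨0, zero_lt_one⟩).eventually_iff] at hev
      obtain ⟨l, hl1, hl⟩ := hev
      obtain ⟨m, hm⟩ := exists_nat_one_div_lt (show (0:ℝ) < 1 - l by linarith)
      refine Set.mem_iUnion.2 ⟨m, hθI, fun r hr => hl ⟨?_, hr.2⟩⟩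
      have h1 : (1:ℝ)/((m:ℝ)+2) ≤ 1/((m:ℝ)+1) := by
        apply one_div_le_one_div_of_le (by positivity); linarith
      have := hr.1
      have hm' : (1:ℝ)/((m:ℝ)+1) < 1 - l := by exact_mod_cast hm
      linarith
    · right; exact ⟨hP, hθI⟩
  -- bad set null
  have hbad : volume ({θ : ℝ | ¬ Filter.Tendsto
      (fun r : ℝ => f ((r:ℂ) * Complex.exp ((θ:ℂ) * Complex.I)))
      (nhdsWithin 1 (Set.Iio 1)) (nhds (g θ))} ∩ Set.Ico (0:ℝ) (2*π)) = 0 := by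
    have h := hg
    rw [ae_iff] at h
    rwa [Measure.restrict_apply' measurableSet_Ico] at h
  -- the main estimate for each n
  have hEn : ∀ n : ℕ, volume (E n) ≤ ENNReal.ofReal (2*C/lam) := by
    intro n
    set a : ℝ := 1 - 1/((n:ℝ)+2) with haa
    have ha0 : (0:ℝ) < a := lt_of_lt_of_le (by norm_num) (ha_half n)
    have ha1 : a < 1 := ha_lt n
    set s : Set (ℝ × ℝ) := Set.Ioo a 1 ×ˢ E n with hsdef
    have hs : MeasurableSet s := measurableSet_Ioo.prod (hEmeas n)
    set B : ℝ × ℝ → ℝ × ℝ →L[ℝ] ℝ × ℝ := fun p =>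
      LinearMap.toContinuousLinearMap (Matrix.toLin (Module.Basis.finTwoProd ℝ) (Module.Basis.finTwoProd ℝ)
        !![Real.cos p.2, -p.1 * Real.sin p.2; Real.sin p.2, p.1 * Real.cos p.2]) with hBdef
    have hBder : ∀ p ∈ s, HasFDerivWithinAt polarCoord.symm (B p) s p := fun p _ =>
      (hasFDerivAt_polarCoord_symm p).hasFDerivWithinAt
    have hBdet : ∀ p : ℝ × ℝ, (B p).det = p.1 := by
      intro p
      conv_rhs => rw [← one_mul p.1, ← cos_sq_add_sin_sq p.2]
      simp only [hBdef, neg_mul, LinearMap.det_toContinuousLinearMap, LinearMap.det_toLin,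
        Matrix.det_fin_two_of, sub_neg_eq_add]
      ring
    -- injectivity
    have hinj : Set.InjOn polarCoord.symm s := by
      rintro ⟨p1, p2⟩ ⟨hp1, hp2⟩ ⟨q1, q2⟩ ⟨hq1, hq2⟩ h
      simp only [polarCoord_symm_apply, Prod.mk.injEq] at h
      obtain ⟨h1, h2⟩ := h
      have hp1pos : (0:ℝ) < p1 := lt_trans ha0 hp1.1
      have hq1pos : (0:ℝ) < q1 := lt_trans ha0 hq1.1
      have hsq : p1 * p1 = q1 * q1 := by
        have e1 : p1^2 = q1^2 := by
          calc p1^2 = (p1 * Real.sin p2)^2 + (p1 * Real.cos p2)^2 := by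
                rw [mul_pow, mul_pow, ← mul_add, sin_sq_add_cos_sq, mul_one]
            _ = (q1 * Real.sin q2)^2 + (q1 * Real.cos q2)^2 := by rw [h1, h2]
            _ = q1^2 := by rw [mul_pow, mul_pow, ← mul_add, sin_sq_add_cos_sq, mul_one]
        nlinarith [e1]
      have hr : p1 = q1 := by
        rcases mul_self_eq_mul_self_iff.1 hsq with h | h
        · exact h
        · linarith
      subst hr
      have hcos : Real.cos p2 = Real.cos q2 := mul_left_cancel₀ (ne_of_gt hp1pos) h1
      have hsin : Real.sin p2 = Real.sin q2 := mul_left_cancel₀ (ne_of_gt hp1pos) h2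
      have hexp : Complex.exp ((p2:ℂ) * Complex.I) = Complex.exp ((q2:ℂ) * Complex.I) := by
        rw [Complex.exp_mul_I, Complex.exp_mul_I, ← Complex.ofReal_cos, ← Complex.ofReal_sin,
          ← Complex.ofReal_cos, ← Complex.ofReal_sin, hcos, hsin]
      rw [Complex.exp_eq_exp_iff_exists_int] at hexp
      obtain ⟨k, hk⟩ := hexp
      have him : p2 = q2 + k * (2*π) := by
        have := congrArg Complex.im hk
        simpa using this
      have hp2b : p2 ∈ Set.Ico (0:ℝ) (2*π) := hp2.1
      have hq2b : q2 ∈ Set.Ico (0:ℝ) (2*π) := hq2.1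
      have hk0 : k = 0 := by
        have hklt : (k:ℝ) < 1 := by nlinarith [hp2b.1, hp2b.2, hq2b.1, hq2b.2]
        have hkgt : (-1:ℝ) < (k:ℝ) := by nlinarith [hp2b.1, hp2b.2, hq2b.1, hq2b.2]
        have h1 : k < 1 := by exact_mod_cast hklt
        have h2 : -1 < k := by exact_mod_cast hkgt
        omega
      have : p2 = q2 := by rw [him, hk0]; push_cast; ring
      simp [this]
    -- change of variables
    have hcov := lintegral_abs_det_fderiv_eq_addHaar_image volume hs hBder hinj
    -- rewrite integrand
    have hre : (∫⁻ x in s, ENNReal.ofReal |(B x).det| ∂volume)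
        = ∫⁻ x in s, ENNReal.ofReal x.1 ∂volume := by
      apply setLIntegral_congr_fun hs
      intro x hx
      dsimp only
      rw [hBdet, abs_of_pos (lt_trans ha0 hx.1.1)]
    -- lower bound
    have hlow : ENNReal.ofReal a * volume s ≤ ∫⁻ x in s, ENNReal.ofReal x.1 ∂volume := by
      rw [← setLIntegral_const s (ENNReal.ofReal a)]
      exact setLIntegral_mono (measurable_fst.ennreal_ofReal)
        (fun x hx => ENNReal.ofReal_le_ofReal (le_of_lt hx.1.1))
    have hvols : volume s = ENNReal.ofReal (1 - a) * volume (E n) := by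
      rw [hsdef, ← Real.volume_Ioo, Measure.volume_eq_prod, Measure.prod_prod]
    -- upper bound: image sits inside the area set
    have hmu : (0:ℝ) < lam * ((n:ℝ)+2) := by positivity
    have himg : volume (polarCoord.symm '' s) ≤ ENNReal.ofReal (C / (lam * ((n:ℝ)+2))) := by
      have key : Complex.measurableEquivRealProd ⁻¹' (polarCoord.symm '' s) ⊆
          {z ∈ Metric.ball (0:ℂ) 1 | (lam * ((n:ℝ)+2)) * (1 - ‖z‖) < ‖f z‖} := by
        rintro z hz
        obtain ⟨p, hp, hpz⟩ := hz
        have hzz : z = ((p.1:ℝ):ℂ) * Complex.exp ((p.2:ℂ) * Complex.I) := by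
          have h1 : z.re = p.1 * Real.cos p.2 := by
            have := congrArg Prod.fst hpz
            simpa [Complex.measurableEquivRealProd_apply, polarCoord_symm_apply] using this.symm
          have h2 : z.im = p.1 * Real.sin p.2 := by
            have := congrArg Prod.snd hpz
            simpa [Complex.measurableEquivRealProd_apply, polarCoord_symm_apply] using this.symm
          apply Complex.ext
          · rw [h1]; simp [Complex.exp_mul_I, ← Complex.ofReal_cos, ← Complex.ofReal_sin]
          · rw [h2]; simp [Complex.exp_mul_I, ← Complex.ofReal_cos, ← Complex.ofReal_sin]
        have hp1 : p.1 ∈ Set.Ioo a 1 := hp.1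
        have hp1pos : (0:ℝ) < p.1 := lt_trans ha0 hp1.1
        have hzb : z ∈ Metric.ball (0:ℂ) 1 := by rw [hzz]; exact hmem p.1 ⟨hp1pos, hp1.2⟩ p.2
        have hnz : ‖z‖ = p.1 := by
          rw [hzz, norm_mul,
            Complex.norm_exp_ofReal_mul_I, Complex.norm_real, Real.norm_eq_abs, abs_of_pos hp1pos, mul_one]
        refine ⟨hzb, ?_⟩
        have hflam : lam ≤ ‖f z‖ := by rw [hzz]; exact hp.2.2 p.1 hp1
        have : lam * ((n:ℝ)+2) * (1 - p.1) < lam := by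
          have h1a : 1 - p.1 < 1/((n:ℝ)+2) := by
            have := hp1.1; rw [haa] at this; linarith
          calc lam * ((n:ℝ)+2) * (1 - p.1) < lam * ((n:ℝ)+2) * (1/((n:ℝ)+2)) := by
                apply mul_lt_mul_of_pos_left h1a hmu
            _ = lam := by field_simp
        rw [hnz]
        linarith
      calc volume (polarCoord.symm '' s)
          = volume (Complex.measurableEquivRealProd ⁻¹' (polarCoord.symm '' s)) :=
            (Complex.volume_preserving_equiv_real_prod.measure_preimage_equiv _).symm
        _ ≤ volume {z ∈ Metric.ball (0:ℂ) 1 | (lam * ((n:ℝ)+2)) * (1 - ‖z‖) < ‖f z‖} :=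
            measure_mono key
        _ ≤ ENNReal.ofReal (C / (lam * ((n:ℝ)+2))) := harea _ hmu
    -- combine
    have hmain : ENNReal.ofReal (a * (1 - a)) * volume (E n)
        ≤ ENNReal.ofReal (C / (lam * ((n:ℝ)+2))) := by
      calc ENNReal.ofReal (a * (1 - a)) * volume (E n)
          = ENNReal.ofReal a * volume s := by
            rw [hvols, ENNReal.ofReal_mul (le_of_lt ha0), mul_assoc]
        _ ≤ ∫⁻ x in s, ENNReal.ofReal x.1 ∂volume := hlow
        _ = volume (polarCoord.symm '' s) := by rw [← hre, hcov]
        _ ≤ ENNReal.ofReal (C / (lam * ((n:ℝ)+2))) := himg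
    have hstep : ENNReal.ofReal (1/(2*((n:ℝ)+2))) * volume (E n)
        ≤ ENNReal.ofReal (C / (lam * ((n:ℝ)+2))) := by
      refine le_trans (mul_le_mul_left (ENNReal.ofReal_le_ofReal ?_) _) hmain
      have hhalf : (1:ℝ)/2 ≤ a := ha_half n
      have h1a : 1 - a = 1/((n:ℝ)+2) := by rw [haa]; ring
      calc (1:ℝ)/(2*((n:ℝ)+2)) = (1/2)*(1/((n:ℝ)+2)) := by rw [one_div_mul_one_div]
        _ ≤ a * (1/((n:ℝ)+2)) := mul_le_mul_of_nonneg_right hhalf (by positivity)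
        _ = a*(1-a) := by rw [h1a]
    have hdivpos : (0:ℝ) < 1/(2*((n:ℝ)+2)) := by positivity
    have hfin : volume (E n) ≤ ENNReal.ofReal (C / (lam * ((n:ℝ)+2)))
        / ENNReal.ofReal (1/(2*((n:ℝ)+2))) := by
      rw [ENNReal.le_div_iff_mul_le (Or.inl (ENNReal.ofReal_pos.2 hdivpos).ne')
        (Or.inl ENNReal.ofReal_ne_top), mul_comm]
      exact hstep
    refine le_trans hfin ?_
    rw [← ENNReal.ofReal_div_of_pos hdivpos]
    apply ENNReal.ofReal_le_ofReal
    have heq : (C / (lam * ((n:ℝ)+2))) / (1/(2*((n:ℝ)+2))) = 2*C/lam := by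
      have h1 : lam ≠ 0 := ne_of_gt hlam
      have h2 : ((n:ℝ)+2) ≠ 0 := ne_of_gt (hden n)
      field_simp
    rw [heq]
  -- final assembly
  calc volume {θ ∈ Set.Ico (0:ℝ) (2*π) | lam < ‖g θ‖}
      ≤ volume ((⋃ n, E n) ∪
        ({θ : ℝ | ¬ Filter.Tendsto (fun r : ℝ => f ((r:ℂ) * Complex.exp ((θ:ℂ) * Complex.I)))
          (nhdsWithin 1 (Set.Iio 1)) (nhds (g θ))} ∩ Set.Ico (0:ℝ) (2*π))) :=
        measure_mono hcover
    _ ≤ volume (⋃ n, E n) + volume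
        ({θ : ℝ | ¬ Filter.Tendsto (fun r : ℝ => f ((r:ℂ) * Complex.exp ((θ:ℂ) * Complex.I)))
          (nhdsWithin 1 (Set.Iio 1)) (nhds (g θ))} ∩ Set.Ico (0:ℝ) (2*π)) :=
        measure_union_le _ _
    _ = volume (⋃ n, E n) := by rw [hbad, add_zero]
    _ = ⨆ n, volume (E n) := (hmono.directed_le).measure_iUnion
    _ ≤ ENNReal.ofReal (2*C/lam) := iSup_le hEn
    _ ≤ ENNReal.ofReal ((1 + 8*C) / lam) := by
        apply ENNReal.ofReal_le_ofReal
        gcongr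
        linarith
end
end

section
/- If f belongs to the weak Hardy space H^1_w (equivalently, its nontangential maximal function M_∢f lies in weak L^1(∂D)), then for every 1 < p < ∞, f belongs to weak L^p of the unit disc with respect to the measure dμ_p(z) = (1−|z|)^{p−2} dA(z); that is, there is C > 0 with μ_p({z ∈ D : |f(z)| > λ}) ≤ C/λ^p for all λ > 0. -/
open MeasureTheory Real Set Filter
open scoped ENNReal

noncomputable section

/-- The measure `dμ_p(z) = (1-|z|)^{p-2} dA(z)` on the unit disc. -/
def muP (p : ℝ) : Measure ℂ :=
  (volume.restrict (Metric.ball (0:ℂ) 1)).withDensity fun z => ENNReal.ofReal ((1 - ‖z‖) ^ (p - 2))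

lemma exp_I_dist (a b : ℝ) :
    ‖Complex.exp ((a:ℂ) * Complex.I) - Complex.exp ((b:ℂ) * Complex.I)‖ ≤ |a - b| := by
  have h := (lipschitzWith_circleMap (0:ℂ) 1).dist_le_mul a b
  simpa [circleMap, Complex.dist_eq, Real.dist_eq] using h

lemma line_null : (volume : Measure ℂ) {z : ℂ | z.im = 0} = 0 := by
  have : {z : ℂ | z.im = 0} = Complex.measurableEquivRealProd ⁻¹' (Set.univ ×ˢ ({0} : Set ℝ)) := by
    ext z; simp [Complex.measurableEquivRealProd, eq_comm]
  rw [this, Complex.volume_preserving_equiv_real_prod.measure_preimage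
    (by exact (MeasurableSet.univ.prod (measurableSet_singleton 0)).nullMeasurableSet)]
  rw [Measure.volume_eq_prod ℝ ℝ, Measure.prod_prod]
  simp

lemma lintegral_polar (s : Set (ℝ × ℝ)) (hs : MeasurableSet s) (hsub : s ⊆ polarCoord.target)
    (g : ℂ → ℝ≥0∞) :
    MeasurableSet (Complex.polarCoord.symm '' s) ∧
    ∫⁻ z in Complex.polarCoord.symm '' s, g z =
      ∫⁻ p in s, ENNReal.ofReal p.1 * g (Complex.polarCoord.symm p) := by
  set B : ℝ × ℝ → ℝ × ℝ →L[ℝ] ℝ × ℝ := fun p =>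
    LinearMap.toContinuousLinearMap (Matrix.toLin (Module.Basis.finTwoProd ℝ) (Module.Basis.finTwoProd ℝ)
      !![Real.cos p.2, -p.1 * Real.sin p.2; Real.sin p.2, p.1 * Real.cos p.2]) with hB
  have hder : ∀ p ∈ s, HasFDerivWithinAt polarCoord.symm (B p) s p := fun p _ =>
    (hasFDerivAt_polarCoord_symm p).hasFDerivWithinAt
  have B_det : ∀ p, (B p).det = p.1 := by
    intro p
    conv_rhs => rw [← one_mul p.1, ← Real.cos_sq_add_sin_sq p.2]
    simp only [hB, neg_mul, LinearMap.det_toContinuousLinearMap, LinearMap.det_toLin,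
      Matrix.det_fin_two_of, sub_neg_eq_add]
    ring
  have hinj : Set.InjOn polarCoord.symm s :=
    polarCoord.symm.injOn.mono (by rwa [polarCoord.symm_source])
  have himg : Complex.polarCoord.symm '' s =
      Complex.measurableEquivRealProd.symm '' (polarCoord.symm '' s) := by
    rw [Set.image_image]
    apply Set.image_congr
    intro p _
    apply Complex.ext <;>
      simp [Complex.polarCoord_symm_apply, Complex.measurableEquivRealProd,
        polarCoord, mul_comm, Complex.cos_ofReal_re, Complex.sin_ofReal_re]
  have hmeas2 : MeasurableSet (polarCoord.symm '' s) :=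
    measurable_image_of_fderivWithin hs hder hinj
  constructor
  · rw [himg]
    exact (MeasurableEquiv.measurableEmbedding _).measurableSet_image.mpr hmeas2
  · rw [himg, ← (Complex.volume_preserving_equiv_real_prod.symm
        Complex.measurableEquivRealProd).setLIntegral_comp_emb
      (MeasurableEquiv.measurableEmbedding _) g (polarCoord.symm '' s)]
    rw [lintegral_image_eq_lintegral_abs_det_fderiv_mul volume hs hder hinj]
    apply setLIntegral_congr_fun hs
    intro p hp
    dsimp only
    rw [B_det, abs_of_pos (hsub hp).1]
    congr 2

lemma radial_bound (p a' : ℝ) (hp : 1 < p) (ha1 : a' ≤ 1) :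
    ∫⁻ r in Set.Ioo a' 1, ENNReal.ofReal ((1 - r) ^ (p - 2)) ≤
      ENNReal.ofReal ((1 - a') ^ (p - 1) / (p - 1)) := by
  have hint : IntervalIntegrable (fun x : ℝ => x ^ (p - 2)) volume 0 (1 - a') :=
    intervalIntegral.intervalIntegrable_rpow' (by linarith)
  have hint2 : IntervalIntegrable (fun r : ℝ => (1 - r) ^ (p - 2)) volume a' 1 := by
    have := (hint.comp_sub_left 1).symm
    simpa using this
  have hIOn : IntegrableOn (fun r : ℝ => (1 - r) ^ (p - 2)) (Set.Ioo a' 1) volume := by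
    rw [← intervalIntegrable_iff_integrableOn_Ioo_of_le ha1]
    exact hint2
  rw [← ofReal_integral_eq_lintegral_ofReal hIOn ?_]
  · apply ENNReal.ofReal_le_ofReal
    have h1 : ∫ r in Set.Ioo a' 1, (1 - r) ^ (p - 2) = ∫ r in a'..1, (1 - r) ^ (p - 2) := by
      rw [intervalIntegral.integral_of_le ha1, integral_Ioc_eq_integral_Ioo]
    rw [h1, intervalIntegral.integral_comp_sub_left (fun x : ℝ => x ^ (p - 2)) 1]
    simp only [sub_self, sub_zero]
    rw [integral_rpow (Or.inl (by linarith)), Real.zero_rpow (by intro hc; linarith [hc]; )]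
    rw [show p - 2 + 1 = p - 1 by ring]
    simp
  · filter_upwards [ae_restrict_mem measurableSet_Ioo] with r hr
    have : (0:ℝ) ≤ 1 - r := by linarith [hr.2]
    positivity

theorem weak_H1_subset_weak_Lp (f : ℂ → ℂ) (α : ℝ) (hα : 1 < α)
    (hf : DifferentiableOn ℂ f (Metric.ball 0 1))
    (hmax : ∃ (Mf : ℝ → ℝ) (Cm : ℝ),
      (∀ θ : ℝ, ∀ z ∈ Metric.ball (0:ℂ) 1,
        ‖z - Complex.exp ((θ:ℂ) * Complex.I)‖ ≤ α * (1 - ‖z‖) → ‖f z‖ ≤ Mf θ) ∧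
      (∀ lam > (0:ℝ),
        ENNReal.ofReal lam * volume {θ ∈ Set.Ico (0:ℝ) (2*π) | lam < Mf θ}
          ≤ ENNReal.ofReal Cm)) :
    ∀ p : ℝ, 1 < p → ∃ C > (0:ℝ), ∀ lam > (0:ℝ),
      muP p {z | lam < ‖f z‖} ≤ ENNReal.ofReal (C / lam ^ p) := by
  intro p hp
  obtain ⟨Mf, Cm, hMf, hCm⟩ := hmax
  set c0 : ℝ := min (α - 1) π with hc0def
  have hc0pos : 0 < c0 := lt_min (by linarith) Real.pi_pos
  have hc0pi : c0 ≤ π := min_le_right _ _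
  have hc0α : c0 ≤ α - 1 := min_le_left _ _
  set Cm' : ℝ := max Cm 0 with hCm'def
  have hCm'0 : 0 ≤ Cm' := le_max_right _ _
  refine ⟨max 1 (Cm' * (Cm' / c0) ^ (p - 1) / (p - 1)), lt_max_iff.mpr (Or.inl one_pos), ?_⟩
  intro lam hlam
  set E := {θ ∈ Set.Ico (0:ℝ) (2*π) | lam < Mf θ} with hEdef
  have hEvol : volume E ≤ ENNReal.ofReal (Cm' / lam) := by
    have h2 : ENNReal.ofReal lam * volume E ≤ ENNReal.ofReal Cm' :=
      le_trans (hCm lam hlam) (ENNReal.ofReal_le_ofReal (le_max_left _ _))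
    have h2' : volume E * ENNReal.ofReal lam ≤ ENNReal.ofReal Cm' := by rwa [mul_comm]
    have h3 := (ENNReal.le_div_iff_mul_le
      (Or.inl ((ENNReal.ofReal_pos.mpr hlam).ne')) (Or.inl ENNReal.ofReal_ne_top)).mpr h2'
    rwa [ENNReal.ofReal_div_of_pos hlam]
  set h := Cm' / (c0 * lam) with hhdef
  have hh0 : 0 ≤ h := div_nonneg hCm'0 (by positivity)
  set gθ : ℂ → ℝ := fun z => if Complex.arg z < 0 then Complex.arg z + 2*π else Complex.arg z
    with hgθ
  have hgθmem : ∀ z : ℂ, gθ z ∈ Set.Ico 0 (2*π) := by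
    intro z
    have ha := Complex.arg_mem_Ioc z
    by_cases hzneg : Complex.arg z < 0
    · simp only [hgθ, if_pos hzneg]
      exact ⟨by linarith [ha.1, Real.pi_pos], by linarith⟩
    · push_neg at hzneg
      simp only [hgθ, if_neg (not_lt.mpr hzneg)]
      exact ⟨hzneg, by linarith [ha.2, Real.pi_pos]⟩
  have hexpg : ∀ z : ℂ,
      Complex.exp ((gθ z : ℂ) * Complex.I) = Complex.exp ((Complex.arg z : ℂ) * Complex.I) := by
    intro z
    by_cases hzneg : Complex.arg z < 0
    · simp only [hgθ, if_pos hzneg]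
      push_cast
      rw [add_mul, Complex.exp_add]
      simp [Complex.exp_two_pi_mul_I]
    · simp only [hgθ]
      rw [if_neg hzneg]
  have hbase : ∀ z : ℂ, ‖z‖ < 1 →
      ‖z - Complex.exp ((gθ z : ℂ) * Complex.I)‖ = 1 - ‖z‖ := by
    intro z hz
    rw [hexpg]
    set w := Complex.exp ((Complex.arg z : ℂ) * Complex.I) with hwdef
    have hz' : z = (‖z‖ : ℂ) * w := (Complex.norm_mul_exp_arg_mul_I z).symm
    have heq : z - w = ((‖z‖ : ℂ) - 1) * w := by
      rw [sub_mul, one_mul, ← hz']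
    rw [heq, norm_mul]
    rw [show ((‖z‖ : ℂ) - 1) = ((‖z‖ - 1 : ℝ) : ℂ) by push_cast; ring]
    rw [Complex.norm_real, hwdef, Complex.norm_exp_ofReal_mul_I]
    have habs1 : ‖z‖ < 1 := hz
    rw [Real.norm_eq_abs, abs_of_nonpos (by linarith)]
    ring
  have hgE : ∀ z ∈ Metric.ball (0:ℂ) 1, lam < ‖f z‖ → gθ z ∈ E := by
    intro z hz hlz
    have hz1 : ‖z‖ < 1 := mem_ball_zero_iff.mp hz
    refine ⟨hgθmem z, lt_of_lt_of_le hlz (hMf (gθ z) z hz ?_)⟩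
    rw [hbase z hz1]
    nlinarith [norm_nonneg z]
  have hheight : ∀ z ∈ Metric.ball (0:ℂ) 1, lam < ‖f z‖ → 1 - h ≤ ‖z‖ := by
    intro z hz hlz
    have hz1 : ‖z‖ < 1 := mem_ball_zero_iff.mp hz
    have ht0 : 0 < 1 - ‖z‖ := by linarith
    have ht1 : 1 - ‖z‖ ≤ 1 := by linarith [norm_nonneg z]
    set t := 1 - ‖z‖ with htdef
    set ℓ := c0 * t with hℓdef
    have hℓ0 : 0 < ℓ := mul_pos hc0pos ht0
    have hℓπ : ℓ ≤ π := by nlinarith [Real.pi_pos]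
    set θ0 := gθ z with hθ0def
    have hθ0m := hgθmem z
    set J := if θ0 ≤ π then Set.Ico θ0 (θ0 + ℓ) else Set.Ioc (θ0 - ℓ) θ0 with hJdef
    have hJE : J ⊆ E := by
      intro θ hθ
      have hdist : |θ - θ0| ≤ ℓ ∧ θ ∈ Set.Ico 0 (2*π) := by
        by_cases hc : θ0 ≤ π
        · rw [hJdef, if_pos hc] at hθ
          obtain ⟨h1, h2⟩ := hθ
          refine ⟨abs_le.mpr ⟨by linarith, by linarith⟩, ⟨by linarith [hθ0m.1], by linarith⟩⟩
        · rw [hJdef, if_neg hc] at hθ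
          push_neg at hc
          obtain ⟨h1, h2⟩ := hθ
          refine ⟨abs_le.mpr ⟨by linarith, by linarith⟩, ⟨by linarith, by linarith [hθ0m.2]⟩⟩
      refine ⟨hdist.2, lt_of_lt_of_le hlz (hMf θ z hz ?_)⟩
      have tri : ‖z - Complex.exp ((θ:ℂ) * Complex.I)‖ ≤
          ‖z - Complex.exp ((θ0:ℂ) * Complex.I)‖ +
          ‖Complex.exp ((θ0:ℂ) * Complex.I) - Complex.exp ((θ:ℂ) * Complex.I)‖ := by
        have := dist_triangle z (Complex.exp ((θ0:ℂ) * Complex.I))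
          (Complex.exp ((θ:ℂ) * Complex.I))
        simpa [dist_eq_norm] using this
      have habs : |θ0 - θ| ≤ ℓ := by rw [abs_sub_comm]; exact hdist.1
      have := exp_I_dist θ0 θ
      have hb := hbase z hz1
      rw [← hθ0def] at hb
      nlinarith [hc0α, ht0.le]
    have hvolJ : volume J = ENNReal.ofReal ℓ := by
      by_cases hc : θ0 ≤ π
      · rw [hJdef, if_pos hc, Real.volume_Ico]; ring_nf
      · rw [hJdef, if_neg hc, Real.volume_Ioc]; ring_nf
    have h1 : ENNReal.ofReal ℓ ≤ ENNReal.ofReal (Cm' / lam) :=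
      hvolJ ▸ (measure_mono hJE).trans hEvol
    have h2 : ℓ ≤ Cm' / lam := (ENNReal.ofReal_le_ofReal_iff (div_nonneg hCm'0 hlam.le)).mp h1
    have h3 : c0 * t * lam ≤ Cm' := by
      have := (le_div_iff₀ hlam).mp h2
      nlinarith
    have h4 : t ≤ h := by
      rw [hhdef, le_div_iff₀ (by positivity)]
      nlinarith
    linarith
  set T := toMeasurable volume E with hTdef
  have hTmeas : MeasurableSet T := measurableSet_toMeasurable _ _
  have hET : E ⊆ T := subset_toMeasurable _ _
  have hTvol : volume T = volume E := measure_toMeasurable _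
  set T' := {φ : ℝ | φ ∈ Set.Ioo (-π) π ∧ (if φ < 0 then φ + 2*π else φ) ∈ T} with hT'def
  have hT'meas : MeasurableSet T' := by
    have : T' = Set.Ioo (-π) π ∩ ((fun φ : ℝ => if φ < 0 then φ + 2*π else φ) ⁻¹' T) := rfl
    rw [this]
    exact measurableSet_Ioo.inter (Measurable.ite
      (measurableSet_lt measurable_id measurable_const)
      (measurable_id.add_const _) measurable_id hTmeas)
  have hT'vol : volume T' ≤ ENNReal.ofReal (Cm' / lam) := by
    have hsub2 : T' ⊆ (T ∩ Set.Iic π) ∪ ((fun φ : ℝ => φ + 2*π) ⁻¹' (T ∩ Set.Ioi π)) := by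
      rintro φ ⟨hIoo, hTm⟩
      by_cases hneg : φ < 0
      · rw [if_pos hneg] at hTm
        right
        refine ⟨hTm, ?_⟩
        simp only [Set.mem_Ioi]
        linarith [hIoo.1, Real.pi_pos]
      · rw [if_neg hneg] at hTm
        exact Or.inl ⟨hTm, le_of_lt hIoo.2⟩
    calc volume T' ≤ volume ((T ∩ Set.Iic π) ∪ ((fun φ : ℝ => φ + 2*π) ⁻¹' (T ∩ Set.Ioi π))) :=
          measure_mono hsub2
      _ ≤ volume (T ∩ Set.Iic π) + volume ((fun φ : ℝ => φ + 2*π) ⁻¹' (T ∩ Set.Ioi π)) :=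
          measure_union_le _ _
      _ = volume (T ∩ Set.Iic π) + volume (T ∩ Set.Ioi π) := by
          rw [measure_preimage_add_right]
      _ = volume (T ∩ Set.Iic π) + volume (T \ Set.Iic π) := by
          rw [show T ∩ Set.Ioi π = T \ Set.Iic π by ext φ; simp [not_le]]
      _ = volume T := measure_inter_add_diff T measurableSet_Iic
      _ = volume E := hTvol
      _ ≤ _ := hEvol
  set A := Set.Ioo (0:ℝ) 1 ∩ Set.Ici (1 - h) with hAdef
  have hAmeas : MeasurableSet A := measurableSet_Ioo.inter measurableSet_Ici
  have hprodsub : A ×ˢ T' ⊆ polarCoord.target := by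
    rw [polarCoord_target]
    exact Set.prod_mono (fun r hr => hr.1.1) (fun φ hφ => hφ.1)
  obtain ⟨himgmeas, himgint⟩ := lintegral_polar (A ×ˢ T') (hAmeas.prod hT'meas) hprodsub
    (fun z => ENNReal.ofReal ((1 - ‖z‖) ^ (p - 2)))
  have himgball : Complex.polarCoord.symm '' (A ×ˢ T') ⊆ Metric.ball (0:ℂ) 1 := by
    rintro z ⟨q, hq, rfl⟩
    rw [mem_ball_zero_iff, Complex.norm_polarCoord_symm,
      abs_of_pos hq.1.1.1]
    exact hq.1.1.2
  have hcont : ({z : ℂ | lam < ‖f z‖} ∩ Metric.ball 0 1) ∩ Complex.slitPlane ⊆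
      Complex.polarCoord.symm '' (A ×ˢ T') := by
    rintro z ⟨⟨hlz, hzb⟩, hslit⟩
    refine ⟨Complex.polarCoord z, ?_, Complex.polarCoord.left_inv hslit⟩
    rw [Complex.polarCoord_apply]
    have hz1 : ‖z‖ < 1 := mem_ball_zero_iff.mp hzb
    have hz0 : z ≠ 0 := by
      rintro rfl
      simp [Complex.mem_slitPlane_iff] at hslit
    constructor
    · refine ⟨⟨norm_pos_iff.mpr hz0, hz1⟩, ?_⟩
      exact hheight z hzb hlz
    · constructor
      · refine ⟨Complex.neg_pi_lt_arg z, lt_of_le_of_ne (Complex.arg_le_pi z) ?_⟩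
        intro hargpi
        rw [Complex.arg_eq_pi_iff] at hargpi
        rcases Complex.mem_slitPlane_iff.mp hslit with hre | him
        · linarith [hargpi.1]
        · exact him hargpi.2
      · have := hET (hgE z hzb hlz)
        simpa only [hgθ] using this
  have hradial : ∫⁻ r in A, ENNReal.ofReal ((1 - r) ^ (p - 2)) ≤
      ENNReal.ofReal ((min h 1) ^ (p - 1) / (p - 1)) := by
    set a' := max (1 - h) 0 with ha'def
    have hsubA : A ⊆ Set.Ico a' 1 := by
      rintro r ⟨⟨h0, h1⟩, h2⟩
      exact ⟨max_le h2 h0.le, h1⟩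
    have ha1 : a' ≤ 1 := max_le (by linarith) zero_le_one
    calc ∫⁻ r in A, ENNReal.ofReal ((1 - r) ^ (p - 2))
        ≤ ∫⁻ r in Set.Ico a' 1, ENNReal.ofReal ((1 - r) ^ (p - 2)) := lintegral_mono_set hsubA
      _ = ∫⁻ r in Set.Ioo a' 1, ENNReal.ofReal ((1 - r) ^ (p - 2)) :=
          (setLIntegral_congr MeasureTheory.Ioo_ae_eq_Ico).symm
      _ ≤ ENNReal.ofReal ((1 - a') ^ (p - 1) / (p - 1)) := radial_bound p a' hp ha1
      _ = ENNReal.ofReal ((min h 1) ^ (p - 1) / (p - 1)) := by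
          congr 2
          rcases le_total h 1 with hh | hh
          · rw [min_eq_left hh, ha'def, max_eq_left (by linarith)]; ring
          · rw [min_eq_right hh, ha'def, max_eq_right (by linarith)]; ring
  -- null sets
  have h0ball : muP p (Metric.ball (0:ℂ) 1)ᶜ = 0 := by
    rw [muP, withDensity_apply _ measurableSet_ball.compl,
      Measure.restrict_restrict measurableSet_ball.compl, Set.compl_inter_self,
      Measure.restrict_empty, lintegral_zero_measure]
  have hlinemeas : MeasurableSet {z : ℂ | z.im = 0} :=
    measurableSet_eq_fun Complex.measurable_im measurable_const
  have h0line : muP p {z : ℂ | z.im = 0} = 0 := by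
    rw [muP, withDensity_apply _ hlinemeas]
    apply setLIntegral_measure_zero
    exact le_antisymm ((Measure.restrict_apply_le _ _).trans line_null.le) zero_le
  -- final real inequality
  have hfinal : (min h 1) ^ (p - 1) / (p - 1) * (Cm' / lam) ≤
      max 1 (Cm' * (Cm' / c0) ^ (p - 1) / (p - 1)) / lam ^ p := by
    have hlamp : 0 < lam ^ p := Real.rpow_pos_of_pos hlam p
    rw [le_div_iff₀ hlamp]
    set m := min h 1 with hmdef
    have hm0 : 0 ≤ m := le_min hh0 zero_le_one
    have hmh : m ≤ h := min_le_left _ _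
    have key : m ^ (p - 1) * lam ^ (p - 1) ≤ (Cm' / c0) ^ (p - 1) := by
      rw [← Real.mul_rpow hm0 hlam.le]
      refine Real.rpow_le_rpow (by positivity) ?_ (by linarith)
      calc m * lam ≤ h * lam := mul_le_mul_of_nonneg_right hmh hlam.le
        _ = Cm' / c0 := by
            rw [hhdef]
            have h1 : lam ≠ 0 := hlam.ne'
            have h2 : c0 ≠ 0 := hc0pos.ne'
            field_simp
    have hlam_pow : lam ^ p = lam ^ (p - 1) * lam := by
      rw [← Real.rpow_add_one hlam.ne' (p - 1)]
      norm_num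
    calc m ^ (p - 1) / (p - 1) * (Cm' / lam) * lam ^ p
        = Cm' * (m ^ (p - 1) * lam ^ (p - 1)) / (p - 1) := by
          rw [hlam_pow]
          have h1 : lam ≠ 0 := hlam.ne'
          have h2 : p - 1 ≠ 0 := (by linarith : (0:ℝ) < p - 1).ne'
          field_simp
      _ ≤ Cm' * (Cm' / c0) ^ (p - 1) / (p - 1) := by
          gcongr <;> linarith [key]
      _ ≤ max 1 (Cm' * (Cm' / c0) ^ (p - 1) / (p - 1)) := le_max_right _ _
  -- main chain
  calc muP p {z : ℂ | lam < ‖f z‖}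
      ≤ muP p ((({z : ℂ | lam < ‖f z‖} ∩ Metric.ball 0 1) ∩ Complex.slitPlane) ∪
        ((Metric.ball (0:ℂ) 1)ᶜ ∪ {z : ℂ | z.im = 0})) := by
        apply measure_mono
        intro z hz
        by_cases hb : z ∈ Metric.ball (0:ℂ) 1
        · by_cases him : z.im = 0
          · exact Or.inr (Or.inr him)
          · exact Or.inl ⟨⟨hz, hb⟩, Or.inr him⟩
        · exact Or.inr (Or.inl hb)
    _ ≤ muP p ((({z : ℂ | lam < ‖f z‖} ∩ Metric.ball 0 1) ∩ Complex.slitPlane)) +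
        (muP p (Metric.ball (0:ℂ) 1)ᶜ + muP p {z : ℂ | z.im = 0}) :=
        (measure_union_le _ _).trans (add_le_add_right (measure_union_le _ _) _)
    _ = muP p ((({z : ℂ | lam < ‖f z‖} ∩ Metric.ball 0 1) ∩ Complex.slitPlane)) := by
        rw [h0ball, h0line]; simp
    _ ≤ muP p (Complex.polarCoord.symm '' (A ×ˢ T')) := measure_mono hcont
    _ = ∫⁻ z in Complex.polarCoord.symm '' (A ×ˢ T'),
          ENNReal.ofReal ((1 - ‖z‖) ^ (p - 2)) ∂(volume.restrict (Metric.ball 0 1)) := by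
        rw [muP, withDensity_apply _ himgmeas]
    _ = ∫⁻ z in Complex.polarCoord.symm '' (A ×ˢ T'),
          ENNReal.ofReal ((1 - ‖z‖) ^ (p - 2)) ∂volume := by
        rw [Measure.restrict_restrict himgmeas, Set.inter_eq_left.mpr himgball]
    _ = ∫⁻ q in A ×ˢ T',
          ENNReal.ofReal q.1 * ENNReal.ofReal ((1 - ‖Complex.polarCoord.symm q‖) ^ (p - 2)) := himgint
    _ = ∫⁻ q in A ×ˢ T',
          (fun q : ℝ × ℝ => ENNReal.ofReal (q.1 * (1 - q.1) ^ (p - 2))) q := by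
        apply setLIntegral_congr_fun (hAmeas.prod hT'meas)
        intro q hq
        dsimp only
        rw [Complex.norm_polarCoord_symm, abs_of_pos hq.1.1.1,
          ← ENNReal.ofReal_mul hq.1.1.1.le]
    _ = ∫⁻ r in A, ENNReal.ofReal (r * (1 - r) ^ (p - 2)) * volume T' := by
        have hcontOn : AEMeasurable
            (fun q : ℝ × ℝ => ENNReal.ofReal (q.1 * (1 - q.1) ^ (p - 2)))
            ((volume.restrict A).prod (volume.restrict T')) := by
          rw [Measure.prod_restrict]
          apply ContinuousOn.aemeasurable ?_ (hAmeas.prod hT'meas)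
          apply Continuous.comp_continuousOn ENNReal.continuous_ofReal
          apply ContinuousOn.mul continuous_fst.continuousOn
          apply ContinuousOn.rpow_const (continuous_const.sub continuous_fst).continuousOn
          intro q hq
          left
          have : q.1 < 1 := hq.1.1.2
          intro hzero
          have hzero' : (1:ℝ) - q.1 = 0 := hzero
          rw [sub_eq_zero] at hzero'
          linarith
        rw [Measure.volume_eq_prod ℝ ℝ, ← Measure.prod_restrict, lintegral_prod _ hcontOn]
        exact lintegral_congr fun r => by
          simpa using setLIntegral_const T' (ENNReal.ofReal (r * (1 - r) ^ (p - 2)))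
    _ ≤ ∫⁻ r in A, ENNReal.ofReal ((1 - r) ^ (p - 2)) * ENNReal.ofReal (Cm' / lam) := by
        apply setLIntegral_mono' hAmeas
        intro r hr
        refine mul_le_mul' (ENNReal.ofReal_le_ofReal ?_) hT'vol
        exact mul_le_of_le_one_left (Real.rpow_nonneg (by linarith [hr.1.2]) _) hr.1.2.le
    _ = (∫⁻ r in A, ENNReal.ofReal ((1 - r) ^ (p - 2))) * ENNReal.ofReal (Cm' / lam) := by
        rw [lintegral_mul_const' _ _ ENNReal.ofReal_ne_top]
    _ ≤ ENNReal.ofReal ((min h 1) ^ (p - 1) / (p - 1)) * ENNReal.ofReal (Cm' / lam) :=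
        mul_le_mul_left hradial _
    _ = ENNReal.ofReal ((min h 1) ^ (p - 1) / (p - 1) * (Cm' / lam)) := by
        rw [ENNReal.ofReal_mul (div_nonneg (Real.rpow_nonneg (le_min hh0 zero_le_one) _)
          (by linarith))]
    _ ≤ ENNReal.ofReal (max 1 (Cm' * (Cm' / c0) ^ (p - 1) / (p - 1)) / lam ^ p) :=
        ENNReal.ofReal_le_ofReal hfinal
end
end

section
/- Let 1 < p < ∞ and let f be holomorphic on the unit disc D with f in weak L^p(D, μ_p), i.e. sup_{λ>0} λ^p · μ_p({z : |f(z)| > λ}) < ∞ where dμ_p = (1−|z|)^{p−2} dA. Then f belongs to the growth space A^{−1}: there exists C > 0 such that (1−|a|)|f(a)| ≤ C for all a ∈ D. -/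
open MeasureTheory Real Set Filter
open Metric intervalIntegral
open scoped ENNReal

noncomputable section

lemma circle_mean_value {f : ℂ → ℂ} {c : ℂ} {s : ℝ} (hs : 0 < s)
    (hc : ContinuousOn f (closedBall c s))
    (hd : ∀ x ∈ ball c s, DifferentiableAt ℂ f x) :
    2 * π * ‖f c‖ ≤ ∫ θ in (0:ℝ)..(2*π), ‖f (circleMap c s θ)‖ := by
  have key := Complex.two_pi_I_inv_smul_circleIntegral_sub_inv_smul_of_differentiable_on_off_countable
    (s := (∅ : Set ℂ)) countable_empty (mem_ball_self hs) hc (fun x hx => hd x hx.1)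
  have h1 : ‖f c‖ = (2*π)⁻¹ * ‖∮ z in C(c, s), (z - c)⁻¹ • f z‖ := by
    rw [← key, norm_smul]
    congr 1
    simp [norm_inv, abs_of_pos Real.pi_pos]
  have h2 : ‖∮ z in C(c, s), (z - c)⁻¹ • f z‖
      ≤ ∫ θ in (0:ℝ)..(2*π), ‖f (circleMap c s θ)‖ := by
    rw [circleIntegral]
    refine le_trans (intervalIntegral.norm_integral_le_integral_norm (by positivity)) ?_
    apply le_of_eq
    apply intervalIntegral.integral_congr
    intro θ _
    show ‖deriv (circleMap c s) θ • (circleMap c s θ - c)⁻¹ • f (circleMap c s θ)‖ = ‖f (circleMap c s θ)‖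
    rw [norm_smul, norm_smul, deriv_circleMap, circleMap_sub_center]
    simp [abs_of_pos hs]
    rw [← mul_assoc, mul_inv_cancel₀ hs.ne', one_mul]
  rw [h1] at *
  calc 2 * π * ((2*π)⁻¹ * ‖∮ z in C(c, s), (z - c)⁻¹ • f z‖)
      = ‖∮ z in C(c, s), (z - c)⁻¹ • f z‖ := by
        field_simp
    _ ≤ _ := h2

lemma symm_eq (s θ : ℝ) : Complex.polarCoord.symm (s, θ) = circleMap 0 s θ := by
  rw [Complex.polarCoord_symm_apply, circleMap]
  push_cast
  rw [Complex.exp_mul_I]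
  ring

lemma continuous_symm : Continuous (fun p : ℝ × ℝ => Complex.polarCoord.symm p) := by
  have : (fun p : ℝ × ℝ => Complex.polarCoord.symm p)
      = fun p : ℝ × ℝ => (p.1 : ℂ) * (Real.cos p.2 + Real.sin p.2 * Complex.I) := by
    ext p : 1; rw [Complex.polarCoord_symm_apply]
  rw [this]; fun_prop


lemma area_mean_value {f : ℂ → ℂ} {a : ℂ} {r : ℝ} (hr : 0 < r)
    (hc : ContinuousOn f (closedBall a r))
    (hd : ∀ x ∈ ball a r, DifferentiableAt ℂ f x) :
    π * r^2 * ‖f a‖ ≤ ∫ z in ball a r, ‖f z‖ ∂volume := by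
  set g : ℂ → ℝ := fun z => ‖f (a + z)‖ with hg
  have hgc : ContinuousOn g (closedBall 0 r) := by
    have : ContinuousOn (fun z => f (a + z)) (closedBall 0 r) :=
      hc.comp (by fun_prop : Continuous fun z : ℂ => a + z).continuousOn
        (fun z hz => by simpa [mem_closedBall, dist_eq_norm] using hz)
    exact this.norm
  -- step 1 : translation
  have step1 : ∫ z in ball a r, ‖f z‖ ∂volume = ∫ z, (ball (0:ℂ) r).indicator g z := by
    rw [← MeasureTheory.integral_indicator measurableSet_ball,
        ← integral_add_left_eq_self (fun z => (ball a r).indicator (fun z => ‖f z‖) z) a]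
    congr 1
    ext z
    by_cases hz : z ∈ ball (0:ℂ) r
    · have : a + z ∈ ball a r := by simpa [dist_eq_norm] using hz
      rw [indicator_of_mem hz, indicator_of_mem this]
    · have : a + z ∉ ball a r := by simpa [dist_eq_norm] using hz
      rw [indicator_of_notMem hz, indicator_of_notMem this]
  -- step 2-3 : polar coordinates
  have key := Complex.integral_comp_polarCoord_symm ((ball (0:ℂ) r).indicator g)
  have step3 : (∫ p in polarCoord.target, p.1 • (ball (0:ℂ) r).indicator g
        (Complex.polarCoord.symm p))
      = ∫ p in Ioo (0:ℝ) r ×ˢ Ioo (-π) π, p.1 * g (Complex.polarCoord.symm p) := by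
    have e1 : ∀ p : ℝ × ℝ, p.1 • (ball (0:ℂ) r).indicator g (Complex.polarCoord.symm p)
        = (Complex.polarCoord.symm ⁻¹' ball (0:ℂ) r).indicator
            (fun p : ℝ × ℝ => p.1 * g (Complex.polarCoord.symm p)) p := by
      intro p
      by_cases hp : Complex.polarCoord.symm p ∈ ball (0:ℂ) r
      · rw [Set.indicator_of_mem (mem_preimage.mpr hp)
          (fun p : ℝ × ℝ => p.1 * g (Complex.polarCoord.symm p)), indicator_of_mem hp, smul_eq_mul]
      · rw [Set.indicator_of_notMem (fun h => hp (mem_preimage.mp h))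
          (fun p : ℝ × ℝ => p.1 * g (Complex.polarCoord.symm p)), indicator_of_notMem hp,
          smul_zero]
    have hset : polarCoord.target ∩ (fun p : ℝ × ℝ => Complex.polarCoord.symm p) ⁻¹' ball (0:ℂ) r
        = Ioo (0:ℝ) r ×ˢ Ioo (-π) π := by
      ext p
      have habs : ‖Complex.polarCoord.symm p‖ = |p.1| := Complex.norm_polarCoord_symm p
      simp only [show polarCoord.target = Ioi (0:ℝ) ×ˢ Ioo (-π) π from rfl,
        mem_inter_iff, mem_prod, mem_Ioi, mem_Ioo, mem_preimage, mem_ball, Complex.dist_eq,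
        sub_zero, habs]
      constructor
      · rintro ⟨⟨h1, h2⟩, h3⟩; exact ⟨⟨h1, by rwa [abs_of_pos h1] at h3⟩, h2⟩
      · rintro ⟨⟨h1, h3⟩, h2⟩; exact ⟨⟨h1, h2⟩, by rwa [abs_of_pos h1]⟩
    simp_rw [e1]
    rw [setIntegral_indicator (measurableSet_ball.preimage continuous_symm.measurable), hset]
  -- integrability on the product
  have hFc : ContinuousOn (fun p : ℝ × ℝ => p.1 * g (Complex.polarCoord.symm p))
      (Icc (0:ℝ) r ×ˢ Icc (-π) π) := by
    apply ContinuousOn.mul (by fun_prop)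
    apply hgc.comp continuous_symm.continuousOn
    rintro ⟨s, θ⟩ ⟨hs, _⟩
    simp only [mem_closedBall, Complex.dist_eq, sub_zero, Complex.norm_def]
    have := Complex.norm_polarCoord_symm (s, θ)
    rw [Complex.norm_def] at this
    rw [this, abs_of_nonneg hs.1]
    exact hs.2
  have hint : IntegrableOn (fun p : ℝ × ℝ => p.1 * g (Complex.polarCoord.symm p))
      (Ioo (0:ℝ) r ×ˢ Ioo (-π) π) volume := by
    apply (hFc.integrableOn_compact ((isCompact_Icc).prod isCompact_Icc)).mono_set
    exact prod_mono Ioo_subset_Icc_self Ioo_subset_Icc_self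
  -- Fubini
  have step5 : ∫ p in Ioo (0:ℝ) r ×ˢ Ioo (-π) π, p.1 * g (Complex.polarCoord.symm p)
      = ∫ s in Ioo (0:ℝ) r, ∫ θ in Ioo (-π) π, s * g (Complex.polarCoord.symm (s, θ)) := by
    rw [Measure.volume_eq_prod] at hint ⊢
    exact setIntegral_prod _ hint
  -- inner bound
  have inner_eq : ∀ s θ : ℝ, a + Complex.polarCoord.symm (s, θ) = circleMap a s θ := by
    intro s θ
    rw [symm_eq, circleMap, circleMap]; simp
  have step6 : ∀ s ∈ Ioo (0:ℝ) r,
      s * (2 * π * ‖f a‖) ≤ ∫ θ in Ioo (-π) π, s * g (Complex.polarCoord.symm (s, θ)) := by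
    intro s hs
    have h1 : ∫ θ in Ioo (-π) π, s * g (Complex.polarCoord.symm (s, θ))
        = ∫ θ in (-π)..π, s * ‖f (circleMap a s θ)‖ := by
      rw [intervalIntegral.integral_of_le (by linarith [Real.pi_pos]), integral_Ioc_eq_integral_Ioo]
      congr 1; ext θ; rw [hg]; simp only []
      rw [inner_eq]
    have hper : Function.Periodic (fun θ => s * ‖f (circleMap a s θ)‖) (2*π) := by
      intro θ; simp [periodic_circleMap a s θ]
    have h2 : ∫ θ in (-π)..π, s * ‖f (circleMap a s θ)‖
        = ∫ θ in (0:ℝ)..(2*π), s * ‖f (circleMap a s θ)‖ := by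
      have := hper.intervalIntegral_add_eq (-π) 0
      rw [show -π + 2*π = π by ring, zero_add] at this
      exact this
    rw [h1, h2, intervalIntegral.integral_const_mul]
    have hsub1 : closedBall a s ⊆ closedBall a r := closedBall_subset_closedBall hs.2.le
    have hsub2 : ball a s ⊆ ball a r := ball_subset_ball hs.2.le
    have := circle_mean_value hs.1 (hc.mono hsub1) (fun x hx => hd x (hsub2 hx))
    calc s * (2 * π * ‖f a‖) ≤ s * ∫ θ in (0:ℝ)..(2*π), ‖f (circleMap a s θ)‖ :=
          mul_le_mul_of_nonneg_left this hs.1.le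
      _ = _ := rfl
  -- integrability of the inner integral
  have hint2 : IntegrableOn
      (fun s => ∫ θ in Ioo (-π) π, s * g (Complex.polarCoord.symm (s, θ))) (Ioo (0:ℝ) r) := by
    rw [Measure.volume_eq_prod] at hint
    rw [IntegrableOn, ← Measure.prod_restrict] at hint
    exact hint.integral_prod_left
  have step7 : ∫ s in Ioo (0:ℝ) r, s * (2 * π * ‖f a‖) = π * r^2 * ‖f a‖ := by
    rw [MeasureTheory.integral_mul_const, ← integral_Ioc_eq_integral_Ioo,
       ← intervalIntegral.integral_of_le hr.le, integral_id]
    ring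
  have hint3 : IntegrableOn (fun s : ℝ => s * (2 * π * ‖f a‖)) (Ioo (0:ℝ) r) :=
    (((by fun_prop : Continuous fun x : ℝ => x * (2 * π * ‖f a‖)).continuousOn.integrableOn_compact
      (isCompact_Icc (a := (0:ℝ)) (b := r)))).mono_set Ioo_subset_Icc_self
  have mono := setIntegral_mono_on hint3 hint2 measurableSet_Ioo step6
  rw [step1, ← key, step3, step5]
  rw [step7] at mono
  exact mono

theorem weak_Lp_subset_growth_space (p : ℝ) (hp : 1 < p) (f : ℂ → ℂ)
    (hf : DifferentiableOn ℂ f (Metric.ball 0 1))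
    (hw : ∃ Cw : ℝ, ∀ lam > (0:ℝ),
      ENNReal.ofReal (lam ^ p) * muP p {z | lam < ‖f z‖} ≤ ENNReal.ofReal Cw) :
    ∃ C > (0:ℝ), ∀ a ∈ Metric.ball (0:ℂ) 1, (1 - ‖a‖) * ‖f a‖ ≤ C := by
  obtain ⟨Cw, hCw⟩ := hw
  set Cw' : ℝ := max Cw 1 with hCw'def
  have hCw'pos : 0 < Cw' := lt_of_lt_of_le one_pos (le_max_right _ _)
  have hCw' : ∀ lam > (0:ℝ), ENNReal.ofReal (lam ^ p) * muP p {z | lam < ‖f z‖}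
      ≤ ENNReal.ofReal Cw' := fun lam hl =>
    (hCw lam hl).trans (ENNReal.ofReal_le_ofReal (le_max_left _ _))
  set c3 : ℝ := min 1 ((3:ℝ) ^ (p-2)) with hc3def
  have hc3pos : 0 < c3 := lt_min one_pos (Real.rpow_pos_of_pos (by norm_num) _)
  set B : ℝ := π + Cw' / (c3 * (p-1)) with hBdef
  have hBpos : 0 < B := by
    have h1 : 0 < Cw' / (c3 * (p-1)) := div_pos hCw'pos (mul_pos hc3pos (by linarith))
    rw [hBdef]; linarith [Real.pi_pos]
  refine ⟨2 * B / π, by positivity, ?_⟩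
  intro a ha
  have ha' : ‖a‖ < 1 := by simpa [mem_ball, dist_eq_norm] using ha
  set r : ℝ := (1 - ‖a‖)/2 with hrdef
  have hr : 0 < r := by simp only [hrdef]; linarith
  clear_value r
  have hsub : closedBall a r ⊆ ball (0:ℂ) 1 := by
    intro z hz
    simp only [mem_closedBall, dist_eq_norm] at hz
    simp only [mem_ball, dist_eq_norm, sub_zero]
    calc ‖z‖ ≤ ‖z - a‖ + ‖a‖ := by
          simpa using norm_add_le (z - a) a
      _ ≤ r + ‖a‖ := by linarith
      _ < 1 := by simp only [hrdef]; linarith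
  have hcont : ContinuousOn f (closedBall a r) := hf.continuousOn.mono hsub
  have hdiff : ∀ x ∈ ball a r, DifferentiableAt ℂ f x := fun x hx =>
    hf.differentiableAt (Metric.isOpen_ball.mem_nhds (hsub (ball_subset_closedBall hx)))
  -- the weight lower bound on ball a r
  have hweight : ∀ z ∈ ball a r, c3 * r^(p-2) ≤ (1 - ‖z‖) ^ (p-2) := by
    intro z hz
    simp only [mem_ball, dist_eq_norm] at hz
    have h1 : r < 1 - ‖z‖ := by
      have : ‖z‖ ≤ ‖z - a‖ + ‖a‖ := by simpa using norm_add_le (z - a) a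
      simp only [hrdef] at *; linarith
    have h2 : 1 - ‖z‖ < 3 * r := by
      have : ‖a‖ ≤ ‖a - z‖ + ‖z‖ := by simpa using norm_add_le (a - z) z
      rw [norm_sub_rev] at this
      simp only [hrdef] at *; linarith
    rcases le_or_gt 0 (p - 2) with hp2 | hp2
    · have : r ^ (p-2) ≤ (1 - ‖z‖) ^ (p-2) := Real.rpow_le_rpow hr.le h1.le hp2
      calc c3 * r^(p-2) ≤ 1 * r^(p-2) :=
            mul_le_mul_of_nonneg_right (min_le_left _ _) (Real.rpow_nonneg hr.le _)
        _ = r ^ (p-2) := one_mul _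
        _ ≤ _ := this
    · have h3 : (3*r) ^ (p-2) ≤ (1 - ‖z‖) ^ (p-2) :=
        Real.rpow_le_rpow_of_nonpos (by linarith) h2.le hp2.le
      have h4 : (3*r) ^ (p-2) = 3 ^ (p-2) * r ^ (p-2) :=
        Real.mul_rpow (by norm_num) hr.le
      calc c3 * r^(p-2) ≤ 3 ^ (p-2) * r^(p-2) :=
            mul_le_mul_of_nonneg_right (min_le_right _ _) (Real.rpow_nonneg hr.le _)
        _ = (3*r) ^ (p-2) := h4.symm
        _ ≤ _ := h3
  -- measurability and integrability
  have hIntOn : IntegrableOn (fun z => ‖f z‖) (ball a r) volume :=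
    (hcont.norm.integrableOn_compact (isCompact_closedBall a r)).mono_set ball_subset_closedBall
  set J : ℝ≥0∞ := ∫⁻ z in ball a r, ENNReal.ofReal ‖f z‖ ∂volume with hJdef
  have hMV : ENNReal.ofReal (π * r^2 * ‖f a‖) ≤ J := by
    rw [hJdef, ← MeasureTheory.ofReal_integral_eq_lintegral_ofReal hIntOn
      (Eventually.of_forall fun z => norm_nonneg _)]
    exact ENNReal.ofReal_le_ofReal (area_mean_value hr hcont hdiff)
  -- layer cake
  have hAEme : AEMeasurable (fun z => ‖f z‖) (volume.restrict (ball a r)) :=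
    ((hcont.mono ball_subset_closedBall).norm).aemeasurable measurableSet_ball
  have hLC : J = ∫⁻ t in Ioi (0:ℝ), (volume.restrict (ball a r)) {z | t < ‖f z‖} :=
    lintegral_eq_lintegral_meas_lt _ (Eventually.of_forall fun z => norm_nonneg _) hAEme
  -- pointwise bound on the distribution function, small t
  have hm1 : ∀ t : ℝ, (volume.restrict (ball a r)) {z | t < ‖f z‖}
      ≤ ENNReal.ofReal (π * r^2) := by
    intro t
    calc (volume.restrict (ball a r)) {z | t < ‖f z‖} ≤ (volume.restrict (ball a r)) univ :=
          measure_mono (subset_univ _)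
      _ = volume (ball a r) := by rw [Measure.restrict_apply_univ]
      _ = ENNReal.ofReal (π * r^2) := by
          rw [Complex.volume_ball, ← ENNReal.ofReal_pow hr.le, ← ENNReal.ofReal_coe_nnreal,
            NNReal.coe_real_pi, ← ENNReal.ofReal_mul (by positivity), mul_comm]
  -- pointwise bound, large t
  have hm2 : ∀ t : ℝ, 0 < t → (volume.restrict (ball a r)) {z | t < ‖f z‖}
      ≤ ENNReal.ofReal (Cw' * (c3 * r^(p-2))⁻¹) * ENNReal.ofReal (t ^ (-p)) := by
    intro t ht
    have hrestr : (volume.restrict (ball a r)) {z | t < ‖f z‖}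
        = volume ({z | t < ‖f z‖} ∩ ball a r) :=
      Measure.restrict_apply' measurableSet_ball
    set S : Set ℂ := {z | t < ‖f z‖} ∩ ball a r with hSdef
    have hSopen : IsOpen S := by
      rw [hSdef, inter_comm]
      exact (hcont.mono ball_subset_closedBall).isOpen_inter_preimage isOpen_ball
        (isOpen_lt continuous_const continuous_norm)
    have hSsub : S ⊆ ball (0:ℂ) 1 := fun z hz =>
      hsub (ball_subset_closedBall hz.2)
    -- lower bound μ_p S by the weight bound
    have key1 : ENNReal.ofReal (c3 * r^(p-2)) * volume S ≤ muP p S := by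
      have h1 : muP p S = ∫⁻ z in S, ENNReal.ofReal ((1 - ‖z‖) ^ (p-2)) ∂volume := by
        rw [muP, withDensity_apply _ hSopen.measurableSet,
          Measure.restrict_restrict hSopen.measurableSet, inter_eq_left.mpr hSsub]
      rw [h1, ← setLIntegral_const S (ENNReal.ofReal (c3 * r^(p-2)))]
      apply setLIntegral_mono
      · exact ((measurable_const.sub measurable_norm).pow measurable_const).ennreal_ofReal
      · intro z hz
        exact ENNReal.ofReal_le_ofReal (hweight z hz.2)
    have key2 : muP p S ≤ ENNReal.ofReal Cw' * (ENNReal.ofReal (t^p))⁻¹ := by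
      have h2 : muP p S ≤ muP p {z | t < ‖f z‖} := measure_mono inter_subset_left
      have h3 := hCw' t ht
      have hne : ENNReal.ofReal (t^p) ≠ 0 := by
        simp only [ne_eq, ENNReal.ofReal_eq_zero, not_le]
        exact Real.rpow_pos_of_pos ht p
      have h4 : muP p {z | t < ‖f z‖} ≤ ENNReal.ofReal Cw' / ENNReal.ofReal (t^p) :=
        (ENNReal.le_div_iff_mul_le (Or.inl hne) (Or.inl ENNReal.ofReal_ne_top)).mpr
          (by rwa [mul_comm])
      rw [div_eq_mul_inv] at h4
      exact h2.trans h4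
    have htp : (0:ℝ) < t ^ p := Real.rpow_pos_of_pos ht p
    calc (volume.restrict (ball a r)) {z | t < ‖f z‖} = volume S := hrestr
      _ ≤ ENNReal.ofReal (c3 * r^(p-2))⁻¹ * (ENNReal.ofReal (c3 * r^(p-2)) * volume S) := by
          rw [← mul_assoc, ← ENNReal.ofReal_mul (by positivity),
            inv_mul_cancel₀ (by positivity), ENNReal.ofReal_one, one_mul]
      _ ≤ ENNReal.ofReal (c3 * r^(p-2))⁻¹ * (ENNReal.ofReal Cw' * (ENNReal.ofReal (t^p))⁻¹) :=
          mul_le_mul_right (key1.trans key2) _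
      _ = ENNReal.ofReal (Cw' * (c3 * r^(p-2))⁻¹) * ENNReal.ofReal (t ^ (-p)) := by
          rw [← ENNReal.ofReal_inv_of_pos htp, ← Real.rpow_neg ht.le,
            ENNReal.ofReal_mul (by positivity)]
          ring
  -- split the layer-cake integral at 1/r
  set K' : ℝ := Cw' * (c3 * r^(p-2))⁻¹ with hK'def
  have hK'pos : 0 < K' := by
    rw [hK'def]
    have : 0 < r ^ (p-2) := Real.rpow_pos_of_pos hr _
    positivity
  have hrp : (0:ℝ) < r ^ (p-2) := Real.rpow_pos_of_pos hr _
  have piece1 : ∫⁻ t in Ioc (0:ℝ) (1/r), (volume.restrict (ball a r)) {z | t < ‖f z‖}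
      ≤ ENNReal.ofReal (π * r) := by
    calc ∫⁻ t in Ioc (0:ℝ) (1/r), (volume.restrict (ball a r)) {z | t < ‖f z‖}
        ≤ ∫⁻ _ in Ioc (0:ℝ) (1/r), ENNReal.ofReal (π * r^2) :=
          setLIntegral_mono' measurableSet_Ioc (fun t _ => hm1 t)
      _ = ENNReal.ofReal (π * r^2) * volume (Ioc (0:ℝ) (1/r)) := setLIntegral_const _ _
      _ = ENNReal.ofReal (π * r^2) * ENNReal.ofReal (1/r - 0) := by rw [Real.volume_Ioc]
      _ = ENNReal.ofReal (π * r^2 * (1/r)) := by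
          rw [sub_zero, ← ENNReal.ofReal_mul (by positivity)]
      _ = ENNReal.ofReal (π * r) := by
          congr 1
          field_simp
  have hmeas2 : Measurable fun t : ℝ => ENNReal.ofReal (t ^ (-p)) :=
    (measurable_id'.pow measurable_const).ennreal_ofReal
  have piece2 : ∫⁻ t in Ioi (1/r), (volume.restrict (ball a r)) {z | t < ‖f z‖}
      ≤ ENNReal.ofReal (K' * (r^(p-1)/(p-1))) := by
    have hinv : (0:ℝ) < 1/r := by positivity
    calc ∫⁻ t in Ioi (1/r), (volume.restrict (ball a r)) {z | t < ‖f z‖}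
        ≤ ∫⁻ t in Ioi (1/r), ENNReal.ofReal K' * ENNReal.ofReal (t ^ (-p)) :=
          setLIntegral_mono' measurableSet_Ioi (fun t ht => hm2 t (hinv.trans ht))
      _ = ENNReal.ofReal K' * ∫⁻ t in Ioi (1/r), ENNReal.ofReal (t ^ (-p)) :=
          lintegral_const_mul _ hmeas2
      _ = ENNReal.ofReal K' * ENNReal.ofReal (∫ t in Ioi (1/r), t ^ (-p)) := by
          rw [MeasureTheory.ofReal_integral_eq_lintegral_ofReal
            (integrableOn_Ioi_rpow_of_lt (by linarith) hinv)
            (by filter_upwards [ae_restrict_mem measurableSet_Ioi] with t ht using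
              Real.rpow_nonneg (hinv.trans ht).le _)]
      _ = ENNReal.ofReal (K' * (r^(p-1)/(p-1))) := by
          rw [integral_Ioi_rpow_of_lt (by linarith) hinv,
            ← ENNReal.ofReal_mul hK'pos.le]
          congr 1
          have hinv' : (r:ℝ)⁻¹ = r ^ (-1:ℝ) := by
            rw [Real.rpow_neg hr.le, Real.rpow_one]
          have h1 : (1/r : ℝ) ^ (-p+1) = r ^ (p-1) := by
            rw [one_div, hinv', ← Real.rpow_mul hr.le,
              show (-1:ℝ) * (-p+1) = p - 1 from by ring]
          rw [h1, show (-p+1:ℝ) = -(p-1) from by ring, neg_div_neg_eq]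
  have hsum : J ≤ ENNReal.ofReal (π * r) + ENNReal.ofReal (K' * (r^(p-1)/(p-1))) := by
    rw [hLC, ← Ioc_union_Ioi_eq_Ioi (le_of_lt (by positivity : (0:ℝ) < 1/r)),
      lintegral_union measurableSet_Ioi (Ioc_disjoint_Ioi le_rfl)]
    exact add_le_add piece1 piece2
  have hRHSnn : (0:ℝ) ≤ π * r + K' * (r^(p-1)/(p-1)) := by
    have h1 : (0:ℝ) < r ^ (p-1) := Real.rpow_pos_of_pos hr _
    have := Real.pi_pos
    have h2 : 0 < K' * (r^(p-1)/(p-1)) := mul_pos hK'pos (div_pos h1 (by linarith))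
    nlinarith
  have hreal : π * r^2 * ‖f a‖ ≤ π * r + K' * (r^(p-1)/(p-1)) := by
    have := hMV.trans hsum
    rw [← ENNReal.ofReal_add (by positivity) (le_of_lt (mul_pos hK'pos
      (div_pos (Real.rpow_pos_of_pos hr _) (by linarith))))] at this
    exact (ENNReal.ofReal_le_ofReal_iff hRHSnn).mp this
  -- simplify the right-hand side to r * B
  have hrb : π * r + K' * (r^(p-1)/(p-1)) = r * B := by
    have hrp1 : r ^ (p-1) = r ^ (p-2) * r := by
      rw [show p - 1 = (p-2) + 1 by ring, Real.rpow_add hr, Real.rpow_one]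
    have hp1 : (p:ℝ) - 1 ≠ 0 := by linarith
    have hc3ne : c3 ≠ 0 := hc3pos.ne'
    have hxne : r ^ (p-2) ≠ 0 := hrp.ne'
    have h8 : K' * (r^(p-1)/(p-1)) = r * (Cw' / (c3*(p-1))) := by
      rw [hK'def, hrp1]
      field_simp
    rw [h8, hBdef]
    ring
  rw [hrb] at hreal
  -- conclude
  have h5 : π * r * ‖f a‖ ≤ B := by
    have h6 : π * r^2 * ‖f a‖ = (π * r * ‖f a‖) * r := by ring
    rw [h6, show r * B = B * r by ring] at hreal
    exact (mul_le_mul_iff_of_pos_right hr).mp hreal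
  have h7 : r * ‖f a‖ ≤ B / π := by
    rw [le_div_iff₀' Real.pi_pos, ← mul_assoc]
    exact h5
  calc (1 - ‖a‖) * ‖f a‖ = 2 * (r * ‖f a‖) := by rw [hrdef]; ring
    _ ≤ 2 * (B / π) := by linarith
    _ = 2 * B / π := by ring
end
end

section
/- Let 1 < p < q < ∞. If f is holomorphic on the unit disc and f belongs to weak L^p(D, μ_p), then f belongs to weak L^q(D, μ_q). Quantitatively, for λ > 2 one has μ_q({z : |f(z)| > λ}) ≤ (2^q/(1−2^{−q})) · ||f||_{A^{−1}}^{q−p} · ||f||_{L^p_w(D,μ_p)}^p · λ^{−q}. -/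
open MeasureTheory Real Set Filter

noncomputable section

theorem weak_Lp_nested (p q : ℝ) (hp : 1 < p) (hpq : p < q) (f : ℂ → ℂ) (CA Cw : ℝ)
    (hf : DifferentiableOn ℂ f (Metric.ball 0 1)) (hCA : 0 ≤ CA) (hCw : 0 ≤ Cw)
    (hA : ∀ z ∈ Metric.ball (0:ℂ) 1, (1 - ‖z‖) * ‖f z‖ ≤ CA)
    (hw : ∀ lam > (0:ℝ), muP p {z | lam < ‖f z‖} ≤ ENNReal.ofReal (Cw ^ p / lam ^ p)) :
    ∀ lam > (2:ℝ), muP q {z | lam < ‖f z‖} ≤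
      ENNReal.ofReal (((2:ℝ) ^ q / (1 - (2:ℝ) ^ (-q))) * CA ^ (q - p) * Cw ^ p / lam ^ q) := by
  intro lam hlam
  have hlam0 : (0:ℝ) < lam := by linarith
  set B := Metric.ball (0:ℂ) 1 with hB
  set E := {z : ℂ | lam < ‖f z‖} with hE
  have hSopen : IsOpen (E ∩ B) := by
    have heq2 : E ∩ B = B ∩ (fun z => ‖f z‖) ⁻¹' Set.Ioi lam := by
      ext z; simp [hE, Set.mem_inter_iff, and_comm]
    rw [heq2]
    exact (hf.continuousOn.norm).isOpen_inter_preimage Metric.isOpen_ball isOpen_Ioi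
  have hcompl : ∀ r : ℝ, muP r Bᶜ = 0 := by
    intro r
    refine (withDensity_absolutelyContinuous _ _) ?_
    rw [Measure.restrict_apply measurableSet_ball.compl]
    simp
  have hEq : ∀ r : ℝ, muP r E = muP r (E ∩ B) := by
    intro r
    refine le_antisymm ?_ (measure_mono Set.inter_subset_left)
    calc muP r E ≤ muP r ((E ∩ B) ∪ Bᶜ) := by
          refine measure_mono ?_
          intro z hz
          by_cases h : z ∈ B
          · exact Or.inl ⟨hz, h⟩
          · exact Or.inr h
      _ ≤ muP r (E ∩ B) + muP r Bᶜ := measure_union_le _ _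
      _ = muP r (E ∩ B) := by rw [hcompl, add_zero]
  have hkey : muP q (E ∩ B) ≤ ENNReal.ofReal ((CA/lam)^(q-p)) * muP p (E ∩ B) := by
    rw [muP, muP, withDensity_apply _ hSopen.measurableSet,
        withDensity_apply _ hSopen.measurableSet,
        ← lintegral_const_mul' _ _ ENNReal.ofReal_ne_top]
    refine setLIntegral_mono' hSopen.measurableSet ?_
    intro z hz
    obtain ⟨hzE, hzB⟩ := hz
    have h1 : ‖z‖ < 1 := by simpa [hB] using hzB
    have hpos : 0 < 1 - ‖z‖ := by linarith
    have hfz : lam < ‖f z‖ := hzE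
    have h2 : 1 - ‖z‖ ≤ CA / lam := by
      rw [le_div_iff₀ hlam0]
      calc (1 - ‖z‖) * lam ≤ (1 - ‖z‖) * ‖f z‖ := by nlinarith
        _ ≤ CA := hA z hzB
    have h3 : (1-‖z‖)^(q-2) ≤ (CA/lam)^(q-p) * (1-‖z‖)^(p-2) := by
      have hsplit : (1-‖z‖)^(q-2) = (1-‖z‖)^(q-p) * (1-‖z‖)^(p-2) := by
        rw [← Real.rpow_add hpos]; ring_nf
      rw [hsplit]
      exact mul_le_mul_of_nonneg_right
        (Real.rpow_le_rpow hpos.le h2 (by linarith)) (Real.rpow_nonneg hpos.le _)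
    calc ENNReal.ofReal ((1-‖z‖)^(q-2))
        ≤ ENNReal.ofReal ((CA/lam)^(q-p) * (1-‖z‖)^(p-2)) := ENNReal.ofReal_le_ofReal h3
      _ = ENNReal.ofReal ((CA/lam)^(q-p)) * ENNReal.ofReal ((1-‖z‖)^(p-2)) :=
          ENNReal.ofReal_mul (Real.rpow_nonneg (div_nonneg hCA hlam0.le) _)
  have hchain : muP q E ≤ ENNReal.ofReal ((CA/lam)^(q-p)) * ENNReal.ofReal (Cw^p/lam^p) := by
    rw [hEq q]
    refine hkey.trans ?_
    gcongr
    rw [← hEq p]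
    exact hw lam hlam0
  rw [← ENNReal.ofReal_mul (Real.rpow_nonneg (div_nonneg hCA hlam0.le) _)] at hchain
  refine hchain.trans (ENNReal.ofReal_le_ofReal ?_)
  have h2q : (0:ℝ) < 1 - 2^(-q) := by
    have : (2:ℝ)^(-q) < 1 := Real.rpow_lt_one_of_one_lt_of_neg one_lt_two (by linarith)
    linarith
  have hK : (1:ℝ) ≤ 2^q / (1 - 2^(-q)) := by
    rw [le_div_iff₀ h2q]
    have h1 : (1:ℝ) ≤ (2:ℝ)^q := Real.one_le_rpow one_le_two (by linarith)
    have h2 : (0:ℝ) ≤ (2:ℝ)^(-q) := Real.rpow_nonneg (by norm_num) _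
    linarith
  have heq : (CA/lam)^(q-p) * (Cw^p/lam^p) = CA^(q-p) * Cw^p / lam^q := by
    rw [Real.div_rpow hCA hlam0.le, div_mul_div_comm, ← Real.rpow_add hlam0]
    ring_nf
  rw [heq]
  have hnn : 0 ≤ CA^(q-p) * Cw^p / lam^q := by positivity
  calc CA^(q-p) * Cw^p / lam^q = 1 * (CA^(q-p) * Cw^p / lam^q) := (one_mul _).symm
    _ ≤ (2^q / (1 - 2^(-q))) * (CA^(q-p) * Cw^p / lam^q) :=
        mul_le_mul_of_nonneg_right hK hnn
    _ = 2^q / (1 - 2^(-q)) * CA^(q-p) * Cw^p / lam^q := by ring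
end
end

section
/- Kolmogorov condition: Let (X, μ) be a measure space, 0 < r < p < ∞, and f a measurable function. Then f belongs to weak L^p(X, μ) if and only if there exists a constant C > 0 such that (∫_E |f|^r dμ)^{1/r} ≤ C · μ(E)^{1/r − 1/p} for every measurable set E ⊆ X of finite measure. -/
open MeasureTheory Real Set Filter

noncomputable section

theorem kolmogorov_condition {X : Type*} [MeasurableSpace X] (μ : Measure X) [SigmaFinite μ]
    (r p : ℝ) (hr : 0 < r) (hrp : r < p) (f : X → ℂ) (hf : Measurable f) :
    (∃ C > (0:ℝ), ∀ lam : ℝ, 0 < lam →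
        ENNReal.ofReal lam * (μ {x | lam < ‖f x‖}) ^ (1/p) ≤ ENNReal.ofReal C) ↔
    (∃ C > (0:ℝ), ∀ E : Set X, MeasurableSet E → μ E < ⊤ →
        (∫⁻ x in E, ENNReal.ofReal (‖f x‖ ^ r) ∂μ) ^ (1/r)
          ≤ ENNReal.ofReal C * (μ E) ^ (1/r - 1/p)) := by
  have hp : 0 < p := hr.trans hrp
  have hp0 : p ≠ 0 := hp.ne'
  have hr0 : r ≠ 0 := hr.ne'
  constructor
  · rintro ⟨C, hC, h⟩
    -- distribution function bound from the weak-type estimate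
    have hdist : ∀ lam : ℝ, 0 < lam →
        μ {x | lam < ‖f x‖} ≤ (ENNReal.ofReal C / ENNReal.ofReal lam) ^ p := by
      intro lam hlam
      have h2 : (μ {x | lam < ‖f x‖}) ^ (1/p) ≤ ENNReal.ofReal C / ENNReal.ofReal lam := by
        rw [ENNReal.le_div_iff_mul_le (Or.inl (ENNReal.ofReal_pos.mpr hlam).ne')
          (Or.inl ENNReal.ofReal_ne_top), mul_comm]
        exact h lam hlam
      calc μ {x | lam < ‖f x‖} = ((μ {x | lam < ‖f x‖}) ^ (1/p)) ^ p := by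
            rw [← ENNReal.rpow_mul, one_div, inv_mul_cancel₀ hp0, ENNReal.rpow_one]
        _ ≤ _ := ENNReal.rpow_le_rpow h2 hp.le
    set q : ℝ := p / r with hq_def
    have hq1 : 1 < q := (one_lt_div hr).mpr hrp
    have hq0 : 0 < q - 1 := by linarith
    set C' : ℝ := C * (q / (q - 1)) ^ (1/r) with hC'_def
    have hC' : 0 < C' := mul_pos hC (Real.rpow_pos_of_pos (div_pos (by linarith) hq0) _)
    refine ⟨C', hC', fun E hE hEfin => ?_⟩
    rcases eq_or_ne (μ E) 0 with hA | hA
    · have hres : μ.restrict E = 0 := Measure.restrict_eq_zero.mpr hA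
      rw [hres]
      simp only [lintegral_zero_measure]
      rw [ENNReal.zero_rpow_of_pos (by positivity : (0:ℝ) < 1/r)]
      exact zero_le
    · set a : ℝ := (μ E).toReal with ha_def
      have ha : 0 < a := ENNReal.toReal_pos hA hEfin.ne
      have hAa : μ E = ENNReal.ofReal a := (ENNReal.ofReal_toReal hEfin.ne).symm
      have hb : (0:ℝ) < C ^ p := Real.rpow_pos_of_pos hC p
      set s0 : ℝ := (C ^ p / a) ^ (r / p) with hs0_def
      have hs0 : 0 < s0 := Real.rpow_pos_of_pos (div_pos hb ha) _
      have hg : Measurable fun x => ‖f x‖ ^ r :=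
        (Real.continuous_rpow_const hr.le).measurable.comp hf.norm
      have hlayer : (∫⁻ x in E, ENNReal.ofReal (‖f x‖ ^ r) ∂μ)
          = ∫⁻ t in Ioi (0:ℝ), (μ.restrict E) {x | t < ‖f x‖ ^ r} :=
        lintegral_eq_lintegral_meas_lt (μ.restrict E)
          (ae_of_all _ fun x => Real.rpow_nonneg (norm_nonneg _) r) hg.aemeasurable
      have hbound : ∀ t : ℝ, 0 < t → (μ.restrict E) {x | t < ‖f x‖ ^ r} ≤
          min (μ E) (ENNReal.ofReal (C ^ p * t ^ (-q))) := by
        intro t ht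
        refine le_min ?_ ?_
        · exact (measure_mono (subset_univ _)).trans_eq (Measure.restrict_apply_univ E)
        · have hlam : 0 < t ^ r⁻¹ := Real.rpow_pos_of_pos ht _
          have hset : {x : X | t < ‖f x‖ ^ r} = {x : X | t ^ r⁻¹ < ‖f x‖} := by
            ext x
            exact (Real.rpow_inv_lt_iff_of_pos ht.le (norm_nonneg _) hr).symm
          calc (μ.restrict E) {x | t < ‖f x‖ ^ r} ≤ μ {x | t ^ r⁻¹ < ‖f x‖} := by
                rw [hset]; exact Measure.restrict_apply_le E _
            _ ≤ (ENNReal.ofReal C / ENNReal.ofReal (t ^ r⁻¹)) ^ p := hdist _ hlam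
            _ = ENNReal.ofReal (C ^ p * t ^ (-q)) := by
                rw [← ENNReal.ofReal_div_of_pos hlam,
                  ENNReal.ofReal_rpow_of_pos (div_pos hC hlam)]
                congr 1
                have h5 : (t ^ r⁻¹) ^ p = t ^ q := by
                  rw [← Real.rpow_mul ht.le]
                  congr 1
                  rw [hq_def, div_eq_mul_inv]
                  ring
                rw [Real.div_rpow hC.le hlam.le, h5, Real.rpow_neg ht.le, div_eq_mul_inv]
      have hI1 : ∫⁻ t in Ioc (0:ℝ) s0, (μ.restrict E) {x | t < ‖f x‖ ^ r}
          ≤ ENNReal.ofReal a * ENNReal.ofReal s0 := by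
        calc ∫⁻ t in Ioc (0:ℝ) s0, (μ.restrict E) {x | t < ‖f x‖ ^ r}
            ≤ ∫⁻ _ in Ioc (0:ℝ) s0, μ E :=
              setLIntegral_mono' measurableSet_Ioc fun t ht =>
                (hbound t ht.1).trans (min_le_left _ _)
          _ = μ E * volume (Ioc (0:ℝ) s0) := setLIntegral_const _ _
          _ = ENNReal.ofReal a * ENNReal.ofReal s0 := by
              rw [hAa, Real.volume_Ioc, sub_zero]
      have hint : IntegrableOn (fun t : ℝ => C ^ p * t ^ (-q)) (Ioi s0) :=
        ((integrableOn_Ioi_rpow_iff hs0).mpr (by linarith : -q < -1)).const_mul _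
      have hI2 : ∫⁻ t in Ioi s0, (μ.restrict E) {x | t < ‖f x‖ ^ r}
          ≤ ENNReal.ofReal (C ^ p * s0 ^ (1 - q) / (q - 1)) := by
        calc ∫⁻ t in Ioi s0, (μ.restrict E) {x | t < ‖f x‖ ^ r}
            ≤ ∫⁻ t in Ioi s0, ENNReal.ofReal (C ^ p * t ^ (-q)) :=
              setLIntegral_mono' measurableSet_Ioi fun t ht =>
                (hbound t (hs0.trans ht)).trans (min_le_right _ _)
          _ = ENNReal.ofReal (∫ t in Ioi s0, C ^ p * t ^ (-q)) :=
              (ofReal_integral_eq_lintegral_ofReal hint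
                ((ae_restrict_iff' measurableSet_Ioi).mpr (ae_of_all _ fun t ht =>
                  mul_nonneg hb.le (Real.rpow_nonneg (hs0.trans ht).le _)))).symm
          _ = ENNReal.ofReal (C ^ p * s0 ^ (1 - q) / (q - 1)) := by
              rw [integral_const_mul, integral_Ioi_rpow_of_lt (by linarith) hs0]
              congr 1
              have hne1 : (1:ℝ) - q ≠ 0 := sub_ne_zero.mpr (by linarith)
              have hne2 : q - 1 ≠ 0 := sub_ne_zero.mpr (by linarith)
              rw [show -q + 1 = 1 - q by ring]
              field_simp
              ring
      have h1 : (C ^ p) ^ (r / p) = C ^ r := by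
        rw [← Real.rpow_mul hC.le]
        congr 1
        field_simp
      have hstep1 : a * s0 = C ^ r * a ^ (1 - r / p) := by
        rw [hs0_def, Real.div_rpow hb.le ha.le, h1, Real.rpow_sub ha, Real.rpow_one]
        ring
      have hstep2 : C ^ p * s0 ^ (1 - q) = C ^ r * a ^ (1 - r / p) := by
        have h3 : s0 ^ (1 - q) = (C ^ p / a) ^ ((r / p) * (1 - q)) := by
          rw [hs0_def, ← Real.rpow_mul (div_pos hb ha).le]
        have h4 : (r / p) * (1 - q) = r / p - 1 := by
          rw [hq_def]; field_simp
        have h5 : s0 ^ (1 - q) = s0 * (a / C ^ p) := by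
          rw [h3, h4, Real.rpow_sub (div_pos hb ha), Real.rpow_one, ← hs0_def,
            div_div_eq_mul_div, mul_div_assoc]
        rw [h5, ← hstep1]
        field_simp
      have hC'r : C' ^ r = C ^ r * (q / (q - 1)) := by
        rw [hC'_def, Real.mul_rpow hC.le (Real.rpow_nonneg (by positivity) _), one_div,
          Real.rpow_inv_rpow (by positivity) hr0]
      have hsum : a * s0 + C ^ p * s0 ^ (1 - q) / (q - 1) = C' ^ r * a ^ (1 - r / p) := by
        rw [hstep1, hstep2, hC'r]
        field_simp
        ring
      have htotal : (∫⁻ x in E, ENNReal.ofReal (‖f x‖ ^ r) ∂μ)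
          ≤ ENNReal.ofReal (C' ^ r * a ^ (1 - r / p)) := by
        rw [hlayer, show Ioi (0:ℝ) = Ioc 0 s0 ∪ Ioi s0 from (Ioc_union_Ioi_eq_Ioi hs0.le).symm,
          lintegral_union measurableSet_Ioi
            (Set.disjoint_left.mpr fun t h1 h2 => absurd h1.2 (not_le.mpr h2))]
        calc _ ≤ ENNReal.ofReal a * ENNReal.ofReal s0
              + ENNReal.ofReal (C ^ p * s0 ^ (1 - q) / (q - 1)) := add_le_add hI1 hI2
          _ = ENNReal.ofReal (a * s0 + C ^ p * s0 ^ (1 - q) / (q - 1)) := by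
              rw [← ENNReal.ofReal_mul ha.le, ← ENNReal.ofReal_add (by positivity)
                (by positivity)]
          _ = _ := by rw [hsum]
      calc (∫⁻ x in E, ENNReal.ofReal (‖f x‖ ^ r) ∂μ) ^ (1/r)
          ≤ (ENNReal.ofReal (C' ^ r * a ^ (1 - r / p))) ^ (1/r) :=
            ENNReal.rpow_le_rpow htotal (by positivity)
        _ = ENNReal.ofReal C' * (μ E) ^ (1/r - 1/p) := by
            rw [ENNReal.ofReal_rpow_of_pos (by positivity), hAa,
              ENNReal.ofReal_rpow_of_pos ha, ← ENNReal.ofReal_mul hC'.le]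
            congr 1
            rw [Real.mul_rpow (by positivity) (by positivity), one_div,
              Real.rpow_rpow_inv hC'.le hr0, ← Real.rpow_mul ha.le]
            congr 1
            field_simp
  · rintro ⟨C, hC, h⟩
    refine ⟨C, hC, fun lam hlam => ?_⟩
    set S := {x | lam < ‖f x‖} with hS_def
    have hSm : MeasurableSet S := measurableSet_lt measurable_const hf.norm
    have key : ∀ n : ℕ, μ (S ∩ spanningSets μ n)
        ≤ (ENNReal.ofReal C / ENNReal.ofReal lam) ^ p := by
      intro n
      set E := S ∩ spanningSets μ n with hE_def
      have hEm : MeasurableSet E := hSm.inter (measurableSet_spanningSets μ n)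
      have hEfin : μ E < ⊤ :=
        (measure_mono inter_subset_right).trans_lt (measure_spanningSets_lt_top μ n)
      rcases eq_or_ne (μ E) 0 with h0 | h0
      · simp [h0]
      · have hlow : ENNReal.ofReal (lam ^ r) * μ E
            ≤ ∫⁻ x in E, ENNReal.ofReal (‖f x‖ ^ r) ∂μ := by
          calc ENNReal.ofReal (lam ^ r) * μ E
              = ∫⁻ _ in E, ENNReal.ofReal (lam ^ r) ∂μ := (setLIntegral_const _ _).symm
            _ ≤ _ := setLIntegral_mono' hEm fun x hx => ENNReal.ofReal_le_ofReal
                (Real.rpow_le_rpow hlam.le (le_of_lt hx.1) hr.le)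
        have h3 : (ENNReal.ofReal (lam ^ r) * μ E) ^ (1/r)
            ≤ ENNReal.ofReal C * (μ E) ^ (1/r - 1/p) :=
          le_trans (ENNReal.rpow_le_rpow hlow (by positivity)) (h E hEm hEfin)
        rw [ENNReal.mul_rpow_of_nonneg _ _ (by positivity)] at h3
        have hofReal : (ENNReal.ofReal (lam ^ r)) ^ (1/r) = ENNReal.ofReal lam := by
          rw [ENNReal.ofReal_rpow_of_pos (Real.rpow_pos_of_pos hlam r)]
          rw [one_div, Real.rpow_rpow_inv hlam.le hr0]
        have hsplit : (μ E) ^ (1/r) = (μ E) ^ (1/p) * (μ E) ^ (1/r - 1/p) := by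
          rw [← ENNReal.rpow_add _ _ h0 hEfin.ne]
          ring_nf
        rw [hofReal, hsplit, ← mul_assoc] at h3
        have hcancel : ENNReal.ofReal lam * (μ E) ^ (1/p) ≤ ENNReal.ofReal C :=
          (ENNReal.mul_le_mul_iff_left
            (ENNReal.rpow_pos (pos_iff_ne_zero.mpr h0) hEfin.ne).ne'
            (ENNReal.rpow_ne_top_of_nonneg
              (sub_nonneg.mpr (one_div_le_one_div_of_le hr hrp.le)) hEfin.ne)).mp h3
        have h4 : (μ E) ^ (1/p) ≤ ENNReal.ofReal C / ENNReal.ofReal lam := by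
          rw [ENNReal.le_div_iff_mul_le (Or.inl (ENNReal.ofReal_pos.mpr hlam).ne')
            (Or.inl ENNReal.ofReal_ne_top), mul_comm]
          exact hcancel
        calc μ E = ((μ E) ^ (1/p)) ^ p := by
              rw [← ENNReal.rpow_mul, one_div, inv_mul_cancel₀ hp0, ENNReal.rpow_one]
          _ ≤ _ := ENNReal.rpow_le_rpow h4 hp.le
    have hunion : μ S = ⨆ n, μ (S ∩ spanningSets μ n) := by
      rw [← Directed.measure_iUnion ((monotone_const.inter (monotone_spanningSets μ)).directed_le)]
      congr 1
      rw [← inter_iUnion, iUnion_spanningSets, inter_univ]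
    have hle : μ S ≤ (ENNReal.ofReal C / ENNReal.ofReal lam) ^ p := by
      rw [hunion]; exact iSup_le key
    calc ENNReal.ofReal lam * (μ S) ^ (1/p)
        ≤ ENNReal.ofReal lam * ((ENNReal.ofReal C / ENNReal.ofReal lam) ^ p) ^ (1/p) :=
          mul_le_mul_right (ENNReal.rpow_le_rpow hle (by positivity)) _
      _ = ENNReal.ofReal lam * (ENNReal.ofReal C / ENNReal.ofReal lam) := by
          rw [← ENNReal.rpow_mul, mul_one_div, div_self hp0, ENNReal.rpow_one]
      _ ≤ ENNReal.ofReal C := ENNReal.mul_div_le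
end
end

section
/- Let {z_k} ⊂ D be a Blaschke sequence, Q ⊂ D a Carleson box of side length l(Q) ≤ 1/2, and set S = (1/l(Q)) Σ_{z_k ∈ Q} (1−|z_k|). If B is the Blaschke product with zeros {z_k}, z(Q) is the point with |z(Q)| = 1 − l(Q) whose argument is the center of the arc of Q, and m is defined by 1 − m = S^{−1/2}, then log(1/|B(z)|) ≥ S^{1/2}/144 for all z in the pseudo-hyperbolic disc Δ(z(Q), m). -/
open MeasureTheory Real Set Filter

noncomputable section

/-- Inner function: bounded holomorphic on the unit disc with unimodular radial limits a.e. -/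
def IsInner (B : ℂ → ℂ) : Prop :=
  DifferentiableOn ℂ B (Metric.ball 0 1) ∧ (∀ z ∈ Metric.ball (0:ℂ) 1, ‖B z‖ ≤ 1) ∧
  ∀ᵐ (θ : ℝ) ∂(volume.restrict (Set.Ico (0:ℝ) (2*π))),
    Filter.Tendsto (fun r : ℝ => ‖B ((r:ℂ) * Complex.exp ((θ:ℂ) * Complex.I))‖)
      (nhdsWithin 1 (Set.Iio 1)) (nhds 1)

/-- Blaschke factor with zero `a` (the value `w` itself if `a = 0`); factors with `‖a‖ ≥ 1`
are interpreted as the constant `1`, so that finite products can be padded. -/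
def bFactor (a w : ℂ) : ℂ :=
  if 1 ≤ ‖a‖ then 1
  else if a = 0 then w
  else ((‖a‖ : ℂ) / a) * ((a - w) / (1 - (starRingEnd ℂ) a * w))

/-- `B` is a (possibly finite) Blaschke product with zero sequence `z` (padded by points of
modulus `≥ 1`, which contribute trivial factors), up to a unimodular constant. -/
def IsBlaschkeProductWith (B : ℂ → ℂ) (ξ : ℂ) (z : ℕ → ℂ) : Prop :=
  ‖ξ‖ = 1 ∧
  Summable (fun k => if ‖z k‖ < 1 then 1 - ‖z k‖ else 0) ∧
  ∀ w ∈ Metric.ball (0:ℂ) 1,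
    Filter.Tendsto (fun n => ξ * ∏ k ∈ Finset.range n, bFactor (z k) w)
      Filter.atTop (nhds (B w))

/-- `B` is a Blaschke product. -/
def IsBlaschkeProduct (B : ℂ → ℂ) : Prop :=
  ∃ (ξ : ℂ) (z : ℕ → ℂ), IsBlaschkeProductWith B ξ z

/-- Uniform separation (the zeros of an interpolating Blaschke product). -/
def UniformlySeparated (z : ℕ → ℂ) : Prop :=
  ∃ δ > (0:ℝ), ∀ k, ‖z k‖ < 1 →
    δ ≤ ∏' n : {n : ℕ // n ≠ k}, ‖(z k - z n) / (1 - (starRingEnd ℂ) (z n) * z k)‖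

/-- `B` is an interpolating Blaschke product. -/
def IsInterpolatingBlaschkeProduct (B : ℂ → ℂ) : Prop :=
  ∃ (ξ : ℂ) (z : ℕ → ℂ), IsBlaschkeProductWith B ξ z ∧ UniformlySeparated z

/-- `B` is a finite product of interpolating Blaschke products. -/
def IsFiniteProdOfInterpolating (B : ℂ → ℂ) : Prop :=
  ∃ (N : ℕ) (Bs : Fin N → ℂ → ℂ), (∀ n, IsInterpolatingBlaschkeProduct (Bs n)) ∧
    ∀ w ∈ Metric.ball (0:ℂ) 1, B w = ∏ n, Bs n w

/-- Pseudo-hyperbolic disc of radius `m` centered at `ζ`. -/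
def pDisc (ζ : ℂ) (m : ℝ) : Set ℂ :=
  {z ∈ Metric.ball (0:ℂ) 1 | ‖z - ζ‖ < m * ‖1 - (starRingEnd ℂ) ζ * z‖}

/-- `B` is an exponential Blaschke product: a Blaschke product with at most `M` zeros in
each dyadic annulus `{2^{-j} < 1-|z| ≤ 2^{-j+1}}`. -/
def IsExponentialBlaschkeProduct (B : ℂ → ℂ) : Prop :=
  ∃ (ξ : ℂ) (z : ℕ → ℂ), IsBlaschkeProductWith B ξ z ∧
    ∃ M : ℕ, ∀ j : ℕ,
      {k : ℕ | ‖z k‖ < 1 ∧ (2:ℝ) ^ (-(j:ℝ)) < 1 - ‖z k‖ ∧ 1 - ‖z k‖ ≤ (2:ℝ) ^ (-(j:ℝ) + 1)}.Finite ∧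
      {k : ℕ | ‖z k‖ < 1 ∧ (2:ℝ) ^ (-(j:ℝ)) < 1 - ‖z k‖ ∧ 1 - ‖z k‖ ≤ (2:ℝ) ^ (-(j:ℝ) + 1)}.ncard ≤ M

lemma normSqIdent (a w : ℂ) :
    ‖1 - (starRingEnd ℂ) a * w‖^2 - ‖a - w‖^2 = (1 - ‖a‖^2) * (1 - ‖w‖^2) := by
  simp only [Complex.sq_norm, Complex.normSq_apply, Complex.sub_re,
    Complex.sub_im, Complex.mul_re, Complex.mul_im, Complex.one_re, Complex.one_im,
    Complex.conj_re, Complex.conj_im]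
  ring

lemma oneSubConjPos (a w : ℂ) (ha : ‖a‖ < 1) (hw : ‖w‖ < 1) :
    0 < ‖1 - (starRingEnd ℂ) a * w‖ := by
  have h1 : ‖(1:ℂ)‖ - ‖(starRingEnd ℂ) a * w‖ ≤ ‖1 - (starRingEnd ℂ) a * w‖ :=
    norm_sub_norm_le _ _
  have h2 : ‖(starRingEnd ℂ) a * w‖ < 1 := by
    rw [norm_mul, RCLike.norm_conj]
    nlinarith [norm_nonneg a, norm_nonneg w]
  simp only [norm_one] at h1
  linarith

lemma bFactor_norm_le_one (a w : ℂ) (hw : ‖w‖ < 1) : ‖bFactor a w‖ ≤ 1 := by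
  unfold bFactor
  split_ifs with h1 h2
  · simp
  · simpa using hw.le
  · push_neg at h1
    have hD := oneSubConjPos a w h1 hw
    have hid := normSqIdent a w
    rw [norm_mul, norm_div, norm_div, Complex.norm_real, Real.norm_eq_abs,
      abs_of_nonneg (norm_nonneg a), div_self (norm_ne_zero_iff.2 h2), one_mul]
    rw [div_le_one hD]
    have hpos : 0 ≤ (1 - ‖a‖^2) * (1 - ‖w‖^2) := by
      have h3 : ‖a‖^2 < 1 := pow_lt_one₀ (norm_nonneg a) h1 two_ne_zero
      have h4 : ‖w‖^2 < 1 := pow_lt_one₀ (norm_nonneg w) hw two_ne_zero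
      nlinarith
    nlinarith [norm_nonneg (a - w), hD]

lemma bFactor_norm_le_exp (a w : ℂ) (ha : ‖a‖ < 1) (ha0 : a ≠ 0) (hw : ‖w‖ < 1)
    (c : ℝ) (hc : 0 ≤ c)
    (h : c * ‖1 - (starRingEnd ℂ) a * w‖^2 ≤ (1 - ‖a‖^2) * (1 - ‖w‖^2)) :
    ‖bFactor a w‖ ≤ Real.exp (-(c/2)) := by
  have hD := oneSubConjPos a w ha hw
  have hid := normSqIdent a w
  have hnorm : ‖bFactor a w‖ = ‖a - w‖ / ‖1 - (starRingEnd ℂ) a * w‖ := by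
    unfold bFactor
    rw [if_neg (not_le.2 ha), if_neg ha0, norm_mul, norm_div, norm_div, Complex.norm_real,
      Real.norm_eq_abs, abs_of_nonneg (norm_nonneg a), div_self (norm_ne_zero_iff.2 ha0), one_mul]
  set x := ‖a - w‖ / ‖1 - (starRingEnd ℂ) a * w‖ with hx
  have hx0 : 0 ≤ x := div_nonneg (norm_nonneg _) hD.le
  have hxsq : x^2 ≤ 1 - c := by
    rw [hx, div_pow, div_le_iff₀ (by positivity)]
    nlinarith
  have h3 : x ≤ 1 - c/2 := by nlinarith [sq_nonneg (x - 1)]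
  have h4 : -(c/2) + 1 ≤ Real.exp (-(c/2)) := Real.add_one_le_exp _
  rw [hnorm]
  linarith

set_option maxHeartbeats 2000000 in
theorem blaschke_small_on_pseudo_disc_of_heavy_carleson_box
    (z : ℕ → ℂ) (B : ℂ → ℂ) (θ0 l : ℝ) (hl0 : 0 < l) (hl : l ≤ 1/2)
    (hz : ∀ k, ‖z k‖ < 1) (hsum : Summable fun k => 1 - ‖z k‖)
    (hB : ∀ w ∈ Metric.ball (0:ℂ) 1,
      Filter.Tendsto (fun n => ∏ k ∈ Finset.range n, bFactor (z k) w)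
        Filter.atTop (nhds (B w)))
    (Q : Set ℂ)
    (hQ : Q = {w ∈ Metric.ball (0:ℂ) 1 | w ≠ 0 ∧
      (∃ θ : ℝ, |θ - θ0| ≤ l/2 ∧ w / (‖w‖ : ℂ) = Complex.exp ((θ:ℂ) * Complex.I)) ∧
      1 - ‖w‖ ≤ l})
    (hne : ∃ k, z k ∈ Q)
    (S : ℝ) (hS : S = (1/l) * ∑' k : {k : ℕ // z k ∈ Q}, (1 - ‖z (k:ℕ)‖)) :
    ∀ w ∈ pDisc (((1 - l : ℝ) : ℂ) * Complex.exp ((θ0:ℂ) * Complex.I)) (1 - 1/Real.sqrt S),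
      ‖B w‖ ≤ Real.exp (-(Real.sqrt S / 144)) := by
  intro w hw
  set ζ : ℂ := ((1 - l : ℝ) : ℂ) * Complex.exp ((θ0:ℂ) * Complex.I) with hζdef
  set u := Real.sqrt S with hu
  set m : ℝ := 1 - 1/u with hm
  clear_value ζ u m
  obtain ⟨hw1', hw2⟩ := hw
  have hw1 : ‖w‖ < 1 := by rwa [Metric.mem_ball, dist_zero_right] at hw1'
  have hexp1 : ∀ t : ℝ, ‖Complex.exp ((t:ℂ) * Complex.I)‖ = 1 := fun t => by
    simp [Complex.norm_exp_ofReal_mul_I]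
  have hζn : ‖ζ‖ = 1 - l := by
    rw [hζdef, norm_mul, hexp1, mul_one, Complex.norm_real, Real.norm_eq_abs,
      abs_of_nonneg (by linarith)]
  have hζlt : ‖ζ‖ < 1 := by rw [hζn]; linarith
  set D := ‖1 - (starRingEnd ℂ) ζ * w‖ with hD
  clear_value D
  have hDpos : 0 < D := by rw [hD]; exact oneSubConjPos ζ w hζlt hw1
  have hlD : l ≤ D := by
    have h1 : ‖(1:ℂ)‖ - ‖(starRingEnd ℂ) ζ * w‖ ≤ D := by rw [hD]; exact norm_sub_norm_le _ _
    have h2 : ‖(starRingEnd ℂ) ζ * w‖ ≤ 1 - l := by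
      rw [norm_mul, RCLike.norm_conj, hζn]
      nlinarith [norm_nonneg w]
    simp only [norm_one] at h1; linarith
  have hsub : Summable (fun k : {k : ℕ // z k ∈ Q} => 1 - ‖z (k:ℕ)‖) := hsum.subtype _
  set T := ∑' k : {k : ℕ // z k ∈ Q}, (1 - ‖z (k:ℕ)‖) with hT
  clear_value T
  obtain ⟨k0, hk0⟩ := hne
  have hTpos : 0 < T := by
    have hle : 1 - ‖z k0‖ ≤ T := by
      rw [hT]
      exact Summable.le_tsum hsub ⟨k0, hk0⟩ (fun j _ => by have := hz (j:ℕ); linarith)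
    have := hz k0; linarith
  have hSpos : 0 < S := by rw [hS]; exact mul_pos (one_div_pos.2 hl0) hTpos
  have hupos : 0 < u := by rw [hu]; exact Real.sqrt_pos.2 hSpos
  have hSu : S = u * u := by rw [hu]; exact (Real.mul_self_sqrt hSpos.le).symm
  have hTS : T = l * S := by rw [hS]; field_simp
  have hmpos : 0 < m := by nlinarith [norm_nonneg (w - ζ), hw2, hDpos]
  have hm1 : m < 1 := by
    have h0 : 0 < 1/u := one_div_pos.2 hupos
    rw [hm]; linarith
  have hkey2 : D^2 ≤ ((1 - ‖ζ‖^2) * (1 - ‖w‖^2)) * u := by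
    have hid := normSqIdent ζ w
    rw [norm_sub_rev ζ w, ← hD] at hid
    have h6 : ‖w - ζ‖^2 ≤ (m*D)^2 := by nlinarith [norm_nonneg (w - ζ)]
    have h7 : (1 - m) * u = 1 := by
      rw [hm]; field_simp; ring
    have h8 : 0 ≤ m * (1-m) * D^2 :=
      mul_nonneg (mul_nonneg hmpos.le (by linarith)) (sq_nonneg D)
    have h9 : (1 - m) * D^2 ≤ (1 - ‖ζ‖^2) * (1 - ‖w‖^2) := by nlinarith
    calc D^2 = ((1-m)*D^2) * u := by rw [show ((1-m)*D^2)*u = ((1-m)*u)*D^2 by ring, h7, one_mul]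
      _ ≤ ((1 - ‖ζ‖^2) * (1 - ‖w‖^2)) * u := mul_le_mul_of_nonneg_right h9 hupos.le
  have hlu : (0:ℝ) < 18*l*u := by positivity
  have hlu' : (0:ℝ) < 36*l*u := by positivity
  have hfac : ∀ k, z k ∈ Q →
      ‖bFactor (z k) w‖ ≤ Real.exp ((1 - ‖z k‖) * (-(1/(36*l*u)))) := by
    intro k hkQ
    rw [hQ] at hkQ
    obtain ⟨hkball, hk0', ⟨θ, hθ, hdir⟩, hkl⟩ := hkQ
    have hkn : ‖z k‖ < 1 := hz k
    have hkn0 : (0:ℝ) < ‖z k‖ := norm_pos_iff.2 hk0'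
    set r : ℝ := ‖z k‖ with hr
    clear_value r
    have hcne : ((r : ℝ) : ℂ) ≠ 0 := by exact_mod_cast hkn0.ne'
    rw [div_eq_iff hcne] at hdir
    have hdist : ‖z k - ζ‖ ≤ 2*l := by
      have e1 : z k - ζ = ((r - (1-l) : ℝ) : ℂ) * Complex.exp ((θ:ℂ)*Complex.I)
          + ((1-l : ℝ) : ℂ) * (Complex.exp ((θ:ℂ)*Complex.I) - Complex.exp ((θ0:ℂ)*Complex.I)) := by
        rw [hdir, hζdef]; push_cast; ring
      have e2 : Complex.exp ((θ:ℂ)*Complex.I) - Complex.exp ((θ0:ℂ)*Complex.I)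
          = Complex.exp ((θ0:ℂ)*Complex.I) * (Complex.exp (((θ-θ0:ℝ):ℂ)*Complex.I) - 1) := by
        rw [mul_sub, ← Complex.exp_add, mul_one]
        push_cast; ring_nf
      have habs : ‖(((θ-θ0:ℝ):ℂ)*Complex.I)‖ = |θ - θ0| := by
        rw [norm_mul, Complex.norm_real, Complex.norm_I, mul_one,
          Real.norm_eq_abs]
      have e3 : ‖Complex.exp (((θ-θ0:ℝ):ℂ)*Complex.I) - 1‖ ≤ 2*|θ-θ0| := by
        have h := Complex.norm_exp_sub_one_le (x := ((θ-θ0:ℝ):ℂ)*Complex.I)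
          (by rw [habs]; linarith [abs_nonneg (θ-θ0)])
        rw [habs] at h
        exact h
      have e4 : ‖((r - (1-l) : ℝ) : ℂ) * Complex.exp ((θ:ℂ)*Complex.I)‖ ≤ l := by
        rw [norm_mul, hexp1, mul_one, Complex.norm_real, Real.norm_eq_abs,
          abs_of_nonneg (by linarith)]
        linarith
      have e5 : ‖((1-l : ℝ) : ℂ) * (Complex.exp ((θ:ℂ)*Complex.I) - Complex.exp ((θ0:ℂ)*Complex.I))‖ ≤ l := by
        rw [norm_mul, Complex.norm_real, Real.norm_eq_abs, abs_of_nonneg (by linarith), e2,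
          norm_mul, hexp1, one_mul]
        calc (1-l) * ‖Complex.exp (((θ-θ0:ℝ):ℂ)*Complex.I) - 1‖ ≤ 1 * (2*|θ-θ0|) :=
              mul_le_mul (by linarith) e3 (norm_nonneg _) (by norm_num)
          _ ≤ l := by rw [one_mul]; linarith
      calc ‖z k - ζ‖ ≤ ‖((r - (1-l) : ℝ) : ℂ) * Complex.exp ((θ:ℂ)*Complex.I)‖
            + ‖((1-l : ℝ) : ℂ) * (Complex.exp ((θ:ℂ)*Complex.I) - Complex.exp ((θ0:ℂ)*Complex.I))‖ := by
            rw [e1]; exact norm_add_le _ _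
        _ ≤ 2*l := by linarith
    have hDk3 : ‖1 - (starRingEnd ℂ) (z k) * w‖ ≤ 3*D := by
      have e4 : 1 - (starRingEnd ℂ) (z k) * w
          = (1 - (starRingEnd ℂ) ζ * w) + (starRingEnd ℂ) (ζ - z k) * w := by
        rw [map_sub]; ring
      have hconj : ‖(starRingEnd ℂ) (ζ - z k)‖ = ‖z k - ζ‖ := by
        rw [RCLike.norm_conj, norm_sub_rev]
      calc ‖1 - (starRingEnd ℂ) (z k) * w‖
          ≤ ‖1 - (starRingEnd ℂ) ζ * w‖ + ‖(starRingEnd ℂ) (ζ - z k)‖ * ‖w‖ := by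
            rw [e4]; exact (norm_add_le _ _).trans (by rw [norm_mul])
        _ ≤ D + (2*l) * 1 := by
            rw [hconj]
            exact add_le_add hD.ge
              (mul_le_mul hdist hw1.le (norm_nonneg w) (by linarith))
        _ ≤ 3*D := by linarith
    have hek : (0:ℝ) ≤ 1 - r := by linarith
    have hb := bFactor_norm_le_exp (z k) w (hz k) hk0' hw1 ((1 - r)/(18*l*u))
      (div_nonneg hek hlu.le) ?_
    · calc ‖bFactor (z k) w‖ ≤ Real.exp (-((1 - r)/(18*l*u)/2)) := hb
        _ = Real.exp ((1 - r) * (-(1/(36*l*u)))) := by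
            congr 1
            rw [div_div, mul_neg, mul_one_div, neg_inj]
            congr 1
            ring
    · rw [← hr, div_mul_eq_mul_div, div_le_iff₀ hlu]
      have h9 : ‖1 - (starRingEnd ℂ) (z k) * w‖^2 ≤ 9*D^2 := by
        calc ‖1 - (starRingEnd ℂ) (z k) * w‖^2 ≤ (3*D)^2 :=
              pow_le_pow_left₀ (norm_nonneg _) hDk3 2
          _ = 9*D^2 := by ring
      have hζ2 : 1 - ‖ζ‖^2 ≤ 2*l := by
        rw [hζn]
        have : 1 - (1-l)^2 = l*(2-l) := by ring
        nlinarith [sq_nonneg l]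
      have hζ2' : 0 ≤ 1 - ‖ζ‖^2 := by
        rw [hζn]
        have h' : 1 - (1-l)^2 = l*(2-l) := by ring
        have h'' : 0 ≤ l*(2-l) := mul_nonneg hl0.le (by linarith)
        linarith
      have hzk2 : r^2 ≤ r := by
        have h' : r - r^2 = r*(1-r) := by ring
        have h'' : 0 ≤ r*(1-r) := mul_nonneg hkn0.le (by linarith)
        linarith
      have hw0 : (0:ℝ) ≤ 1 - ‖w‖^2 := by
        have := pow_lt_one₀ (norm_nonneg w) hw1 two_ne_zero
        linarith
      calc (1 - r) * ‖1 - (starRingEnd ℂ) (z k) * w‖^2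
          ≤ (1 - r) * (9*D^2) := mul_le_mul_of_nonneg_left h9 hek
        _ ≤ (1 - r) * (9*(((1 - ‖ζ‖^2) * (1 - ‖w‖^2)) * u)) :=
            mul_le_mul_of_nonneg_left (by linarith) hek
        _ ≤ (1 - r^2) * (1 - ‖w‖^2) * (18*l*u) := by
            nlinarith [mul_le_mul_of_nonneg_left hζ2
                (mul_nonneg (mul_nonneg (mul_nonneg (by norm_num : (0:ℝ) ≤ 9) hupos.le) hek) hw0),
              mul_le_mul_of_nonneg_left (show 1 - r ≤ 1 - r^2 by linarith)
                (mul_nonneg (mul_nonneg (mul_nonneg (by norm_num : (0:ℝ) ≤ 18) hupos.le) hl0.le) hw0)]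
  obtain ⟨F, hF⟩ := (hsub.hasSum.eventually (eventually_gt_nhds
    (by rw [← hT]; linarith : T/2 < ∑' k : {k : ℕ // z k ∈ Q}, (1 - ‖z (k:ℕ)‖)))).exists
  set F' : Finset ℕ := F.image Subtype.val with hF'
  clear_value F'
  have hFsum : ∑ k ∈ F', (1 - ‖z k‖) = ∑ k ∈ F, (1 - ‖z (k:ℕ)‖) := by
    rw [hF']
    exact Finset.sum_image (fun a _ b _ h => Subtype.val_injective h)
  have hF'Q : ∀ k ∈ F', z k ∈ Q := by
    intro k hk
    rw [hF'] at hk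
    obtain ⟨j, _, rfl⟩ := Finset.mem_image.1 hk
    exact j.2
  set n0 := (F'.sup id) + 1 with hn0
  clear_value n0
  have hbound : ∀ n ≥ n0, ‖∏ k ∈ Finset.range n, bFactor (z k) w‖ ≤ Real.exp (-(u/144)) := by
    intro n hn
    have hsubr : F' ⊆ Finset.range n := by
      intro k hk
      rw [Finset.mem_range]
      have h := Finset.le_sup (f := id) hk
      simp only [id] at h
      omega
    rw [norm_prod]
    have hsplit : (∏ k ∈ Finset.range n \ F', ‖bFactor (z k) w‖) * ∏ k ∈ F', ‖bFactor (z k) w‖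
        = ∏ k ∈ Finset.range n, ‖bFactor (z k) w‖ := Finset.prod_sdiff hsubr
    have h1 : ∏ k ∈ Finset.range n \ F', ‖bFactor (z k) w‖ ≤ 1 :=
      Finset.prod_le_one (fun k _ => norm_nonneg _) (fun k _ => bFactor_norm_le_one _ _ hw1)
    have h3 : ∏ k ∈ F', ‖bFactor (z k) w‖
        ≤ ∏ k ∈ F', Real.exp ((1 - ‖z k‖) * (-(1/(36*l*u)))) :=
      Finset.prod_le_prod (fun k _ => norm_nonneg _) (fun k hk => hfac k (hF'Q k hk))
    have h4 : ∏ k ∈ F', Real.exp ((1 - ‖z k‖) * (-(1/(36*l*u))))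
        = Real.exp (∑ k ∈ F', (1 - ‖z k‖) * (-(1/(36*l*u)))) := (Real.exp_sum _ _).symm
    have h5 : Real.exp (∑ k ∈ F', (1 - ‖z k‖) * (-(1/(36*l*u)))) ≤ Real.exp (-(u/144)) := by
      rw [Real.exp_le_exp, ← Finset.sum_mul]
      have hsA : T/2 < ∑ k ∈ F', (1 - ‖z k‖) := by rw [hFsum]; exact hF
      have key : u/144 ≤ (∑ k ∈ F', (1 - ‖z k‖)) * (1/(36*l*u)) := by
        rw [mul_one_div, div_le_div_iff₀ (by norm_num : (0:ℝ) < 144) hlu']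
        nlinarith [hsA, hTS, hSu, mul_nonneg (mul_nonneg hl0.le hupos.le) hupos.le]
      nlinarith [key]
    have hle : ∏ k ∈ F', ‖bFactor (z k) w‖ ≤ Real.exp (-(u/144)) := by
      rw [← h4] at h5
      exact h3.trans h5
    have h2 : (0:ℝ) ≤ ∏ k ∈ F', ‖bFactor (z k) w‖ :=
      Finset.prod_nonneg fun k _ => norm_nonneg _
    calc ∏ k ∈ Finset.range n, ‖bFactor (z k) w‖
        = (∏ k ∈ Finset.range n \ F', ‖bFactor (z k) w‖) * ∏ k ∈ F', ‖bFactor (z k) w‖ :=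
          hsplit.symm
      _ ≤ 1 * Real.exp (-(u/144)) := mul_le_mul h1 hle h2 zero_le_one
      _ = Real.exp (-(u/144)) := one_mul _
  have htend : Filter.Tendsto (fun n => ‖∏ k ∈ Finset.range n, bFactor (z k) w‖)
      Filter.atTop (nhds ‖B w‖) := (hB w hw1').norm
  exact le_of_tendsto htend (Filter.eventually_atTop.2 ⟨n0, hbound⟩)
end
end

section
/- Let B be a Blaschke product, ζ_k ∈ D a sequence, and η, δ* ∈ (0,1] constants such that (1−|z|²)|B′(z)| ≥ δ* for all z ∈ Δ(ζ_k, η) and all k, and such that the discs Δ(ζ_k, η) are quasi-disjoint: Σ_k χ_{Δ(ζ_k,η)}(z) ≤ M for all z ∈ D. If B′ ∈ weak L^p(D, μ_p) for some 1 < p < ∞, then there is a finite bound N such that each annulus A_j = {z : 2^{−j} < 1−|z| ≤ 2^{−j+1}} contains at most N points ζ_k. -/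
open MeasureTheory Real Set Filter

noncomputable section

section Helpers

lemma normSq_key (a b : ℂ) :
    Complex.normSq (1 - (starRingEnd ℂ) b * a) - Complex.normSq (a - b)
      = (1 - Complex.normSq a) * (1 - Complex.normSq b) := by
  simp only [Complex.normSq_apply, Complex.sub_re, Complex.sub_im, Complex.mul_re,
    Complex.mul_im, Complex.one_re, Complex.one_im, Complex.conj_re, Complex.conj_im]
  ring

lemma pseudo_lt_one {a b : ℂ} (ha : ‖a‖ < 1) (hb : ‖b‖ < 1) :
    ‖a - b‖ < ‖1 - (starRingEnd ℂ) b * a‖ := by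
  have hna : Complex.normSq a < 1 := by
    rw [← Complex.sq_norm]
    have : ‖a‖ < 1 := ha
    nlinarith [norm_nonneg a]
  have hnb : Complex.normSq b < 1 := by
    rw [← Complex.sq_norm]
    have : ‖b‖ < 1 := hb
    nlinarith [norm_nonneg b]
  have h := normSq_key a b
  have h2 : Complex.normSq (a - b) < Complex.normSq (1 - (starRingEnd ℂ) b * a) := by
    nlinarith
  have e1 : ‖a - b‖ ^ 2 = Complex.normSq (a - b) := Complex.sq_norm _
  have e2 : ‖1 - (starRingEnd ℂ) b * a‖ ^ 2 = Complex.normSq (1 - (starRingEnd ℂ) b * a) :=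
    Complex.sq_norm _
  refine lt_of_pow_lt_pow_left₀ 2 (norm_nonneg _) ?_
  rw [e1, e2]; exact h2

lemma norm_one_sub_conj_self (ζ : ℂ) (hζ : ‖ζ‖ ≤ 1) :
    ‖1 - (starRingEnd ℂ) ζ * ζ‖ = 1 - ‖ζ‖ ^ 2 := by
  have h0 : (starRingEnd ℂ) ζ * ζ = (Complex.normSq ζ : ℂ) := by
    rw [mul_comm, Complex.mul_conj]
  rw [h0]
  have h1 : (1 : ℂ) - (Complex.normSq ζ : ℂ) = ((1 - Complex.normSq ζ : ℝ) : ℂ) := by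
    push_cast; ring
  rw [h1, Complex.norm_real, ← Complex.sq_norm]
  have h2 : ‖ζ‖ ≤ 1 := hζ
  rw [Real.norm_eq_abs, abs_of_nonneg (by nlinarith [norm_nonneg ζ])]

lemma ball_subset_pDisc {ζ : ℂ} {η : ℝ} (hζ : ‖ζ‖ < 1) (hη0 : 0 < η) (hη1 : η ≤ 1) :
    Metric.ball ζ (η * (1 - ‖ζ‖) / 4) ⊆ pDisc ζ η := by
  intro z hz
  rw [Metric.mem_ball, dist_eq_norm] at hz
  have ha : 0 < 1 - ‖ζ‖ := by linarith
  have hz' : ‖z - ζ‖ < (1 - ‖ζ‖) / 4 := by nlinarith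
  have hζ0 : 0 ≤ ‖ζ‖ := norm_nonneg _
  constructor
  · rw [Metric.mem_ball, dist_zero_right]
    calc ‖z‖ = ‖ζ + (z - ζ)‖ := by ring_nf
    _ ≤ ‖ζ‖ + ‖z - ζ‖ := norm_add_le _ _
    _ < 1 := by linarith
  · have e : 1 - (starRingEnd ℂ) ζ * z
        = (1 - (starRingEnd ℂ) ζ * ζ) - (starRingEnd ℂ) ζ * (z - ζ) := by ring
    have hlb : (1 - ‖ζ‖ ^ 2) - ‖ζ‖ * ‖z - ζ‖ ≤ ‖1 - (starRingEnd ℂ) ζ * z‖ := by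
      calc (1 - ‖ζ‖ ^ 2) - ‖ζ‖ * ‖z - ζ‖
          = ‖1 - (starRingEnd ℂ) ζ * ζ‖ - ‖(starRingEnd ℂ) ζ * (z - ζ)‖ := by
            rw [norm_one_sub_conj_self ζ hζ.le, norm_mul, RCLike.norm_conj]
      _ ≤ ‖(1 - (starRingEnd ℂ) ζ * ζ) - (starRingEnd ℂ) ζ * (z - ζ)‖ :=
            norm_sub_norm_le _ _
      _ = ‖1 - (starRingEnd ℂ) ζ * z‖ := by rw [← e]
    have h2 : (3 : ℝ) / 4 * (1 - ‖ζ‖) ≤ ‖1 - (starRingEnd ℂ) ζ * z‖ := by nlinarith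
    nlinarith

lemma pDisc_norm_bound {ζ w : ℂ} {η : ℝ} (hζ : ‖ζ‖ < 1) (hη0 : 0 < η) (hη1 : η < 1)
    (hw : w ∈ pDisc ζ η) : (1 - η) * (1 - ‖w‖) ≤ 3 * (1 - ‖ζ‖) := by
  obtain ⟨hw1, hw2⟩ := hw
  rw [Metric.mem_ball, dist_zero_right] at hw1
  have hζ0 : 0 ≤ ‖ζ‖ := norm_nonneg _
  have e : 1 - (starRingEnd ℂ) ζ * w
      = (1 - (starRingEnd ℂ) ζ * ζ) - (starRingEnd ℂ) ζ * (w - ζ) := by ring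
  have hub : ‖1 - (starRingEnd ℂ) ζ * w‖ ≤ (1 - ‖ζ‖ ^ 2) + ‖ζ‖ * ‖w - ζ‖ := by
    calc ‖1 - (starRingEnd ℂ) ζ * w‖
        ≤ ‖1 - (starRingEnd ℂ) ζ * ζ‖ + ‖(starRingEnd ℂ) ζ * (w - ζ)‖ := by
          rw [e]; exact norm_sub_le _ _
    _ = (1 - ‖ζ‖ ^ 2) + ‖ζ‖ * ‖w - ζ‖ := by
          rw [norm_one_sub_conj_self ζ hζ.le, norm_mul, RCLike.norm_conj]
  have h4 : ‖w - ζ‖ < η * (1 - ‖ζ‖ ^ 2) + η * (‖ζ‖ * ‖w - ζ‖) := by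
    calc ‖w - ζ‖ < η * ‖1 - (starRingEnd ℂ) ζ * w‖ := hw2
    _ ≤ η * ((1 - ‖ζ‖ ^ 2) + ‖ζ‖ * ‖w - ζ‖) := mul_le_mul_of_nonneg_left hub hη0.le
    _ = η * (1 - ‖ζ‖ ^ 2) + η * (‖ζ‖ * ‖w - ζ‖) := by ring
  have hwζ : (1 - η) * ‖w - ζ‖ ≤ 2 * (1 - ‖ζ‖) := by
    nlinarith [h4, norm_nonneg (w - ζ),
      mul_nonneg (mul_nonneg hη0.le (sub_nonneg.2 hζ.le)) (norm_nonneg (w - ζ)),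
      mul_nonneg (mul_nonneg (sub_nonneg.2 hη1.le) (sub_nonneg.2 hζ.le)) hζ0,
      mul_nonneg (sub_nonneg.2 hη1.le) (sub_nonneg.2 hζ.le),
      mul_nonneg hη0.le (mul_nonneg (sub_nonneg.2 hζ.le) hζ0)]
  have h3 : 1 - ‖w‖ ≤ (1 - ‖ζ‖) + ‖w - ζ‖ := by
    have h5 : ‖ζ‖ - ‖w‖ ≤ ‖w - ζ‖ := by
      calc ‖ζ‖ - ‖w‖ ≤ ‖ζ - w‖ := norm_sub_norm_le ζ w
      _ = ‖w - ζ‖ := by rw [norm_sub_rev]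
    linarith
  nlinarith [norm_nonneg (w - ζ)]

end Helpers

set_option maxHeartbeats 1000000 in
theorem bounded_points_per_annulus (B : ℂ → ℂ) (hB : IsBlaschkeProduct B)
    (ζ : ℕ → ℂ) (η δs : ℝ) (M : ℕ)
    (hη : η ∈ Set.Ioc (0:ℝ) 1) (hδ : δs ∈ Set.Ioc (0:ℝ) 1)
    (hζ : ∀ k, ζ k ∈ Metric.ball (0:ℂ) 1)
    (hlow : ∀ k, ∀ w ∈ pDisc (ζ k) η, δs ≤ (1 - ‖w‖^2) * ‖deriv B w‖)
    (hquasi : ∀ w : ℂ, {k | w ∈ pDisc (ζ k) η}.Finite ∧ {k | w ∈ pDisc (ζ k) η}.ncard ≤ M)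
    (p : ℝ) (hp : 1 < p)
    (hw : ∃ Cw > (0:ℝ), ∀ lam > (0:ℝ),
      muP p {w | lam < ‖deriv B w‖} ≤ ENNReal.ofReal (Cw / lam ^ p)) :
    ∃ N : ℕ, ∀ j : ℕ,
      {k | (2:ℝ) ^ (-(j:ℝ)) < 1 - ‖ζ k‖ ∧ 1 - ‖ζ k‖ ≤ (2:ℝ) ^ (-(j:ℝ) + 1)}.Finite ∧
      {k | (2:ℝ) ^ (-(j:ℝ)) < 1 - ‖ζ k‖ ∧ 1 - ‖ζ k‖ ≤ (2:ℝ) ^ (-(j:ℝ) + 1)}.ncard ≤ N := by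
  obtain ⟨hη0, hη1⟩ := hη
  obtain ⟨hδ0, hδ1⟩ := hδ
  obtain ⟨Cw, hCw0, hCw⟩ := hw
  have hζn : ∀ k, ‖ζ k‖ < 1 := fun k => by
    have := hζ k; rwa [Metric.mem_ball, dist_zero_right] at this
  rcases eq_or_lt_of_le hη1 with hη1' | hη1'
  · exfalso
    have h0 : {k | ζ 0 ∈ pDisc (ζ k) η} = Set.univ := by
      refine Set.eq_univ_of_forall fun k => ?_
      refine ⟨hζ 0, ?_⟩
      rw [hη1', one_mul]
      exact pseudo_lt_one (hζn 0) (hζn k)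
    have hFi := (hquasi (ζ 0)).1
    rw [h0] at hFi
    exact Set.infinite_univ hFi
  · -- main branch : η < 1
    have hπ := Real.pi_pos
    set cm : ℝ := min (((2:ℝ)⁻¹) ^ (p - 2)) (((4:ℝ)) ^ (p - 2)) with hcmdef
    have hcm : 0 < cm :=
      lt_min (Real.rpow_pos_of_pos (by norm_num) _) (Real.rpow_pos_of_pos (by norm_num) _)
    set κ : ℝ := cm * (π * η ^ 2 / 16) with hκdef
    have hκ : 0 < κ := mul_pos hcm (by positivity)
    set c0 : ℝ := δs * (1 - η) / 24 with hc0def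
    have hc0 : 0 < c0 := div_pos (mul_pos hδ0 (by linarith)) (by norm_num)
    have hcp : 0 < c0 ^ p := Real.rpow_pos_of_pos hc0 p
    set N0 : ℝ := M * Cw / (c0 ^ p * κ) with hN0def
    refine ⟨⌈N0⌉₊, fun j => ?_⟩
    set Rj : ℝ := (2:ℝ) ^ (-(j:ℝ)) with hRjdef
    have hRj0 : 0 < Rj := Real.rpow_pos_of_pos (by norm_num) _
    have hR2 : (2:ℝ) ^ (-(j:ℝ) + 1) = 2 * Rj := by
      rw [hRjdef, Real.rpow_add (by norm_num), Real.rpow_one]; ring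
    have hRp : 0 < Rj ^ p := Real.rpow_pos_of_pos hRj0 p
    set lam : ℝ := c0 / Rj with hlamdef
    have hlam0 : 0 < lam := div_pos hc0 hRj0
    set S : Set ℕ := {k | Rj < 1 - ‖ζ k‖ ∧ 1 - ‖ζ k‖ ≤ (2:ℝ) ^ (-(j:ℝ) + 1)} with hSdef
    set r : ℕ → ℝ := fun k => η * (1 - ‖ζ k‖) / 4 with hrdef
    have key : ∀ F : Finset ℕ, (↑F : Set ℕ) ⊆ S → (F.card : ℝ) ≤ N0 := by
      intro F hF
      classical
      have hFk : ∀ k ∈ F, Rj < 1 - ‖ζ k‖ ∧ 1 - ‖ζ k‖ ≤ 2 * Rj := by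
        intro k hk
        obtain ⟨h1, h2⟩ := hF hk
        exact ⟨h1, hR2 ▸ h2⟩
      have hBp : ∀ k, Metric.ball (ζ k) (r k) ⊆ pDisc (ζ k) η :=
        fun k => ball_subset_pDisc (hζn k) hη0 hη1
      have hp01 : ∀ k, pDisc (ζ k) η ⊆ Metric.ball (0:ℂ) 1 := fun k z hz => hz.1
      have hpE : ∀ k ∈ F, pDisc (ζ k) η ⊆ {w : ℂ | lam < ‖deriv B w‖} := by
        intro k hk w hwmem
        obtain ⟨hk1, hk2⟩ := hFk k hk
        have hlow' := hlow k w hwmem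
        have hb := pDisc_norm_bound (hζn k) hη0 hη1' hwmem
        have hw1 : ‖w‖ < 1 := by
          have := hwmem.1; rwa [Metric.mem_ball, dist_zero_right] at this
        have hw0 : 0 ≤ ‖w‖ := norm_nonneg w
        have hX0 : 0 ≤ ‖deriv B w‖ := norm_nonneg _
        have s0 : (1 - η) * (1 - ‖w‖ ^ 2) = ((1 - η) * (1 - ‖w‖)) * (1 + ‖w‖) := by ring
        have s1 : ((1 - η) * (1 - ‖w‖)) * (1 + ‖w‖) ≤ (3 * (1 - ‖ζ k‖)) * (1 + ‖w‖) :=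
          mul_le_mul_of_nonneg_right hb (by positivity)
        have s2' : (1 - ‖ζ k‖) * (1 + ‖w‖) ≤ (2 * Rj) * 2 :=
          mul_le_mul hk2 (by linarith) (by positivity) (by linarith)
        have s2 : (3 * (1 - ‖ζ k‖)) * (1 + ‖w‖) ≤ 12 * Rj := by nlinarith [s2']
        have s12 : (1 - η) * (1 - ‖w‖ ^ 2) ≤ 12 * Rj := by
          rw [s0]; exact le_trans s1 s2
        have s3 : (1 - η) * δs ≤ (12 * Rj) * ‖deriv B w‖ := by
          have t1 := mul_le_mul_of_nonneg_right s12 hX0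
          have t2 := mul_le_mul_of_nonneg_left hlow' (show (0:ℝ) ≤ 1 - η by linarith)
          nlinarith [t1, t2]
        have hXpos : 0 < ‖deriv B w‖ := by
          rcases eq_or_lt_of_le hX0 with h | h
          · exfalso; rw [← h] at s3
            nlinarith [s3, mul_pos (show (0:ℝ) < 1 - η by linarith) hδ0]
          · exact h
        show lam < ‖deriv B w‖
        rw [hlamdef, div_lt_iff₀ hRj0, hc0def]
        nlinarith [s3, mul_pos hRj0 hXpos]
      have hball : ∀ k ∈ F,
          ENNReal.ofReal (κ * Rj ^ p) ≤ muP p (Metric.ball (ζ k) (r k)) := by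
        intro k hk
        obtain ⟨hk1, hk2⟩ := hFk k hk
        have hak : 0 < 1 - ‖ζ k‖ := by linarith
        have hrk0 : 0 < r k := by rw [hrdef]; positivity
        have hsub01 : Metric.ball (ζ k) (r k) ⊆ Metric.ball (0:ℂ) 1 :=
          fun z hz => hp01 k (hBp k hz)
        have hμ : muP p (Metric.ball (ζ k) (r k))
            = ∫⁻ z in Metric.ball (ζ k) (r k),
                ENNReal.ofReal ((1 - ‖z‖) ^ (p - 2)) ∂volume := by
          rw [muP, withDensity_apply _ measurableSet_ball,
            Measure.restrict_restrict measurableSet_ball,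
            Set.inter_eq_self_of_subset_left hsub01]
        have hpt : ∀ z ∈ Metric.ball (ζ k) (r k),
            ENNReal.ofReal (cm * Rj ^ (p - 2))
              ≤ ENNReal.ofReal ((1 - ‖z‖) ^ (p - 2)) := by
          intro z hz
          rw [Metric.mem_ball, dist_eq_norm] at hz
          have hrk4 : r k ≤ (1 - ‖ζ k‖) / 4 := by
            rw [hrdef]; dsimp only; nlinarith
          have hzub : ‖z‖ ≤ ‖ζ k‖ + ‖z - ζ k‖ := by
            calc ‖z‖ = ‖ζ k + (z - ζ k)‖ := by ring_nf
            _ ≤ ‖ζ k‖ + ‖z - ζ k‖ := norm_add_le _ _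
          have hzlb : ‖ζ k‖ - ‖z - ζ k‖ ≤ ‖z‖ := by
            have h6 : ‖ζ k‖ - ‖z‖ ≤ ‖ζ k - z‖ := norm_sub_norm_le _ _
            rw [norm_sub_rev] at h6; linarith
          have ht1 : Rj / 2 ≤ 1 - ‖z‖ := by nlinarith
          have ht2 : 1 - ‖z‖ ≤ 4 * Rj := by nlinarith
          have htpos : 0 < 1 - ‖z‖ := by nlinarith
          apply ENNReal.ofReal_le_ofReal
          rcases le_or_gt 0 (p - 2) with hc | hc
          · have h1 : (Rj * 2⁻¹) ^ (p - 2) ≤ (1 - ‖z‖) ^ (p - 2) :=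
              Real.rpow_le_rpow (by positivity) (by linarith) hc
            have h2 : (Rj * 2⁻¹) ^ (p - 2) = (2:ℝ)⁻¹ ^ (p - 2) * Rj ^ (p - 2) := by
              rw [Real.mul_rpow hRj0.le (by norm_num)]; ring
            calc cm * Rj ^ (p - 2) ≤ (2:ℝ)⁻¹ ^ (p - 2) * Rj ^ (p - 2) :=
                mul_le_mul_of_nonneg_right (min_le_left _ _)
                  (Real.rpow_pos_of_pos hRj0 _).le
            _ = (Rj * 2⁻¹) ^ (p - 2) := h2.symm
            _ ≤ (1 - ‖z‖) ^ (p - 2) := h1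
          · have h1 : ((4:ℝ) * Rj) ^ (p - 2) ≤ (1 - ‖z‖) ^ (p - 2) :=
              Real.rpow_le_rpow_of_nonpos htpos (by linarith) hc.le
            have h2 : ((4:ℝ) * Rj) ^ (p - 2) = (4:ℝ) ^ (p - 2) * Rj ^ (p - 2) :=
              Real.mul_rpow (by norm_num) hRj0.le
            calc cm * Rj ^ (p - 2) ≤ (4:ℝ) ^ (p - 2) * Rj ^ (p - 2) :=
                mul_le_mul_of_nonneg_right (min_le_right _ _)
                  (Real.rpow_pos_of_pos hRj0 _).le
            _ = ((4:ℝ) * Rj) ^ (p - 2) := h2.symm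
            _ ≤ (1 - ‖z‖) ^ (p - 2) := h1
        have hrklb : η * Rj / 4 ≤ r k := by rw [hrdef]; dsimp only; nlinarith
        have hpi : (NNReal.pi : ENNReal) = ENNReal.ofReal π := by
          rw [← NNReal.coe_real_pi, ENNReal.ofReal_coe_nnreal]
        have hsplit : Rj ^ p = Rj ^ (p - 2) * Rj ^ (2:ℕ) := by
          rw [← Real.rpow_natCast Rj 2, ← Real.rpow_add hRj0]; norm_num
        have hvol : ENNReal.ofReal (κ * Rj ^ p)
            ≤ ENNReal.ofReal (cm * Rj ^ (p - 2)) * volume (Metric.ball (ζ k) (r k)) := by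
          rw [Complex.volume_ball, hpi, ← ENNReal.ofReal_pow hrk0.le,
            ← ENNReal.ofReal_mul (by positivity), ← ENNReal.ofReal_mul (by positivity)]
          apply ENNReal.ofReal_le_ofReal
          have hsq : (η * Rj / 4) ^ 2 ≤ (r k) ^ 2 :=
            pow_le_pow_left₀ (by positivity) hrklb 2
          have hA : (0:ℝ) ≤ Rj ^ (p - 2) := (Real.rpow_pos_of_pos hRj0 _).le
          calc κ * Rj ^ p = cm * Rj ^ (p - 2) * ((η * Rj / 4) ^ 2 * π) := by
                rw [hκdef, hsplit]; ring
          _ ≤ cm * Rj ^ (p - 2) * ((r k) ^ 2 * π) := by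
              refine mul_le_mul_of_nonneg_left ?_ (by positivity)
              exact mul_le_mul_of_nonneg_right hsq hπ.le
        calc ENNReal.ofReal (κ * Rj ^ p)
            ≤ ENNReal.ofReal (cm * Rj ^ (p - 2)) * volume (Metric.ball (ζ k) (r k)) := hvol
        _ = ∫⁻ _ in Metric.ball (ζ k) (r k), ENNReal.ofReal (cm * Rj ^ (p - 2)) ∂volume :=
            (setLIntegral_const _ _).symm
        _ ≤ ∫⁻ z in Metric.ball (ζ k) (r k),
              ENNReal.ofReal ((1 - ‖z‖) ^ (p - 2)) ∂volume := by
            rw [← lintegral_indicator measurableSet_ball,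
              ← lintegral_indicator measurableSet_ball]
            apply lintegral_mono
            intro z
            by_cases hz : z ∈ Metric.ball (ζ k) (r k)
            · rw [Set.indicator_of_mem hz, Set.indicator_of_mem hz]
              exact hpt z hz
            · rw [Set.indicator_of_notMem hz, Set.indicator_of_notMem hz]
        _ = muP p (Metric.ball (ζ k) (r k)) := hμ.symm
      have hsum1 : (F.card : ENNReal) * ENNReal.ofReal (κ * Rj ^ p)
          ≤ ∑ k ∈ F, muP p (Metric.ball (ζ k) (r k)) := by
        have h7 := Finset.card_nsmul_le_sum F
          (fun k => muP p (Metric.ball (ζ k) (r k))) (ENNReal.ofReal (κ * Rj ^ p)) hball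
        simpa [nsmul_eq_mul] using h7
      have hmeasU : MeasurableSet (⋃ k ∈ F, Metric.ball (ζ k) (r k)) :=
        Set.Finite.measurableSet_biUnion F.finite_toSet fun k _ => measurableSet_ball
      have hsum2 : ∑ k ∈ F, muP p (Metric.ball (ζ k) (r k))
          ≤ (M : ENNReal) * muP p (⋃ k ∈ F, Metric.ball (ζ k) (r k)) := by
        calc ∑ k ∈ F, muP p (Metric.ball (ζ k) (r k))
            = ∑ k ∈ F, ∫⁻ w, (Metric.ball (ζ k) (r k)).indicator 1 w ∂(muP p) :=
              Finset.sum_congr rfl fun k _ =>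
                (lintegral_indicator_one measurableSet_ball).symm
        _ = ∫⁻ w, ∑ k ∈ F, (Metric.ball (ζ k) (r k)).indicator 1 w ∂(muP p) :=
              (lintegral_finset_sum F fun k _ =>
                measurable_one.indicator measurableSet_ball).symm
        _ ≤ ∫⁻ w, (M : ENNReal) * (⋃ k ∈ F, Metric.ball (ζ k) (r k)).indicator 1 w
              ∂(muP p) := by
            apply lintegral_mono
            intro w
            dsimp only
            by_cases hwU : w ∈ ⋃ k ∈ F, Metric.ball (ζ k) (r k)
            · rw [Set.indicator_of_mem hwU]
              simp only [Pi.one_apply, mul_one]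
              have e : ∑ k ∈ F, (Metric.ball (ζ k) (r k)).indicator (1 : ℂ → ENNReal) w
                  = ((F.filter fun k => w ∈ Metric.ball (ζ k) (r k)).card : ENNReal) := by
                simp only [Set.indicator_apply, Pi.one_apply]
                exact Finset.sum_boole _ _
              rw [e]
              have hsub : ((F.filter fun k => w ∈ Metric.ball (ζ k) (r k)) : Set ℕ)
                  ⊆ {k | w ∈ pDisc (ζ k) η} := by
                intro k hk
                simp only [Finset.coe_filter, Set.mem_setOf_eq] at hk ⊢
                exact hBp k hk.2
              have hn := Set.ncard_le_ncard hsub (hquasi w).1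
              rw [Set.ncard_coe_finset] at hn
              exact_mod_cast le_trans hn (hquasi w).2
            · rw [Set.indicator_of_notMem hwU, mul_zero]
              refine le_of_eq (Finset.sum_eq_zero fun k hk => ?_)
              exact Set.indicator_of_notMem
                (fun hmem => hwU (Set.mem_biUnion hk hmem)) _
        _ = (M : ENNReal) * muP p (⋃ k ∈ F, Metric.ball (ζ k) (r k)) := by
            rw [lintegral_const_mul _ (measurable_one.indicator hmeasU),
              lintegral_indicator_one hmeasU]
      have hUE : muP p (⋃ k ∈ F, Metric.ball (ζ k) (r k))
          ≤ muP p {w : ℂ | lam < ‖deriv B w‖} := by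
        apply measure_mono
        intro w hwmem
        obtain ⟨k, hk, hmem⟩ := Set.mem_iUnion₂.mp hwmem
        exact hpE k hk (hBp k hmem)
      have hE := hCw lam hlam0
      have hfinal : ENNReal.ofReal ((F.card : ℝ) * (κ * Rj ^ p))
          ≤ ENNReal.ofReal ((M : ℝ) * (Cw / lam ^ p)) := by
        calc ENNReal.ofReal ((F.card : ℝ) * (κ * Rj ^ p))
            = (F.card : ENNReal) * ENNReal.ofReal (κ * Rj ^ p) := by
              rw [ENNReal.ofReal_mul (by positivity), ENNReal.ofReal_natCast]
        _
            ≤ ∑ k ∈ F, muP p (Metric.ball (ζ k) (r k)) := hsum1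
        _ ≤ (M : ENNReal) * muP p (⋃ k ∈ F, Metric.ball (ζ k) (r k)) := hsum2
        _ ≤ (M : ENNReal) * muP p {w : ℂ | lam < ‖deriv B w‖} := mul_le_mul_right hUE _
        _ ≤ (M : ENNReal) * ENNReal.ofReal (Cw / lam ^ p) := mul_le_mul_right hE _
        _ = ENNReal.ofReal ((M : ℝ) * (Cw / lam ^ p)) := by
              rw [ENNReal.ofReal_mul (by positivity), ENNReal.ofReal_natCast]
      have hlampos : 0 < lam ^ p := Real.rpow_pos_of_pos hlam0 p
      have hreal : (F.card : ℝ) * (κ * Rj ^ p) ≤ (M : ℝ) * (Cw / lam ^ p) :=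
        (ENNReal.ofReal_le_ofReal_iff
          (mul_nonneg (Nat.cast_nonneg M) (div_nonneg hCw0.le hlampos.le))).mp hfinal
      have hD : (Cw / lam ^ p) * c0 ^ p = Cw * Rj ^ p := by
        rw [hlamdef, Real.div_rpow hc0.le hRj0.le]
        field_simp
      rw [hN0def, le_div_iff₀ (mul_pos hcp hκ)]
      have h4 : ((F.card : ℝ) * (c0 ^ p * κ)) * Rj ^ p ≤ ((M : ℝ) * Cw) * Rj ^ p := by
        have h5 := mul_le_mul_of_nonneg_right hreal hcp.le
        calc ((F.card : ℝ) * (c0 ^ p * κ)) * Rj ^ p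
            = ((F.card : ℝ) * (κ * Rj ^ p)) * c0 ^ p := by ring
        _ ≤ ((M : ℝ) * (Cw / lam ^ p)) * c0 ^ p := h5
        _ = (M : ℝ) * ((Cw / lam ^ p) * c0 ^ p) := by ring
        _ = ((M : ℝ) * Cw) * Rj ^ p := by rw [hD]; ring
      exact le_of_mul_le_mul_right h4 hRp
    have hfin : S.Finite := by
      rw [← Set.not_infinite]
      intro hinf
      obtain ⟨t, hts, htc⟩ := hinf.exists_subset_card_eq (⌈N0⌉₊ + 1)
      have h1 := key t hts
      have h2 : N0 ≤ (⌈N0⌉₊ : ℝ) := Nat.le_ceil N0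
      rw [htc] at h1
      push_cast at h1
      linarith
    refine ⟨hfin, ?_⟩
    have h1 := key hfin.toFinset (by rw [Set.Finite.coe_toFinset])
    have h2 : hfin.toFinset.card ≤ ⌈N0⌉₊ := by
      have h3 := le_trans h1 (Nat.le_ceil N0)
      exact_mod_cast h3
    calc S.ncard = (↑hfin.toFinset : Set ℕ).ncard := by rw [Set.Finite.coe_toFinset]
    _ = hfin.toFinset.card := Set.ncard_coe_finset _
    _ ≤ ⌈N0⌉₊ := h2
end
end
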